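/- arXiv:0802.2734 — 6 statements merged into one kernel-verified Lean document; each statement's English description precedes it below -/
import Mathlib

section
/- Let ℋ be a complex inner product space, let N ∈ ℕ, and let v : ℕ → ℋ satisfy ‖v_n‖ ≤ 1 for 1 ≤ n ≤ N and v_n = 0 for n > N. Then for every integer H with 1 ≤ H ≤ N, ‖(1/N)·Σ_{n=1}^{N} v_n‖² ≤ 4·( 1/H + H/N + (1/H)·Σ_{h=1}^{H} | (1/N)·Σ_{n=1}^{N} ⟨v_{n+h}, v_n⟩ | ). -/
open Finset

lemma sum_shift' {E : Type*} [AddCommGroup E] (N : ℕ) (w : ℕ → E)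
    (hw : ∀ m, N < m → w m = 0) {h : ℕ} (h1 : 1 ≤ h) (h2 : h ≤ N + 1) :
    ∑ n ∈ range N, w (n + h) = (∑ m ∈ Icc 1 N, w m) - ∑ m ∈ Ico 1 h, w m := by
  have e1 : ∑ m ∈ Ico h (h + N), w m = ∑ n ∈ range N, w (n + h) := by
    rw [Finset.sum_Ico_eq_sum_range]
    simp [add_comm]
  have e2 : ∑ m ∈ Ico h (N + 1), w m + ∑ m ∈ Ico (N + 1) (h + N), w m
      = ∑ m ∈ Ico h (h + N), w m :=
    Finset.sum_Ico_consecutive _ h2 (by omega)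
  have e3 : ∑ m ∈ Ico (N + 1) (h + N), w m = 0 :=
    Finset.sum_eq_zero fun m hm => hw m (by simp [Finset.mem_Ico] at hm; omega)
  have e4 : ∑ m ∈ Ico 1 h, w m + ∑ m ∈ Ico h (N + 1), w m = ∑ m ∈ Icc 1 N, w m := by
    rw [Finset.sum_Ico_consecutive _ h1 h2, Finset.Ico_add_one_right_eq_Icc]
  rw [← e1, ← e2, e3, add_zero, ← e4]
  abel

lemma inj_sum_le {s t : Finset ℕ} (g : ℕ → ℝ) (e : ℕ → ℕ)
    (he : ∀ x ∈ s, ∀ y ∈ s, e x = e y → x = y)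
    (hmap : ∀ x ∈ s, e x ∈ t) (hg : ∀ d ∈ t, 0 ≤ g d) :
    ∑ x ∈ s, g (e x) ≤ ∑ d ∈ t, g d := by
  rw [← Finset.sum_image he]
  refine Finset.sum_le_sum_of_subset_of_nonneg ?_ fun d hd _ => hg d hd
  intro d hd
  simp only [Finset.mem_image] at hd
  obtain ⟨x, hx, rfl⟩ := hd
  exact hmap x hx

lemma vdc_arith (a t G Hr Nr : ℝ) (ha : 0 ≤ a) (ht : 0 ≤ t) (hG : 0 ≤ G)
    (hH : 1 ≤ Hr) (hN : 1 ≤ Nr) (hHN : Hr ≤ Nr)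
    (h1 : Hr * a ≤ t + Hr ^ 2) (h2 : t ^ 2 ≤ Nr * (Hr * Nr + Hr ^ 3 + 2 * Hr * G)) :
    (Nr⁻¹ * a) ^ 2 ≤ 4 * (Hr⁻¹ + Hr / Nr + Hr⁻¹ * (Nr⁻¹ * G)) := by
  have hH0 : (0:ℝ) < Hr := lt_of_lt_of_le one_pos hH
  have hN0 : (0:ℝ) < Nr := lt_of_lt_of_le one_pos hN
  have e1 : (Hr * a) ^ 2 ≤ (t + Hr ^ 2) ^ 2 := by
    apply pow_le_pow_left₀ (by positivity) h1
  have key : a ^ 2 * Hr ^ 2 ≤ 2 * Hr * Nr ^ 2 + 2 * Hr ^ 3 * Nr + 4 * Hr * Nr * G + 2 * Hr ^ 4 := by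
    nlinarith [e1, h2, sq_nonneg (t - Hr ^ 2)]
  have key2 : a ^ 2 * Hr ≤ 4 * Nr ^ 2 + 4 * Hr ^ 2 * Nr + 4 * G * Nr := by
    have h4 : a ^ 2 * Hr * Hr ≤ (4 * Nr ^ 2 + 4 * Hr ^ 2 * Nr + 4 * G * Nr) * Hr := by
      nlinarith [key, mul_le_mul_of_nonneg_left hHN (by positivity : (0:ℝ) ≤ 2 * Hr ^ 3),
        mul_le_mul_of_nonneg_left hHN (by positivity : (0:ℝ) ≤ 2 * Hr * Nr)]
    exact le_of_mul_le_mul_right h4 hH0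
  have lhs_eq : (Nr⁻¹ * a) ^ 2 = a ^ 2 * Hr / (Hr * Nr ^ 2) := by
    field_simp
  have rhs_eq : 4 * (Hr⁻¹ + Hr / Nr + Hr⁻¹ * (Nr⁻¹ * G))
      = (4 * Nr ^ 2 + 4 * Hr ^ 2 * Nr + 4 * G * Nr) / (Hr * Nr ^ 2) := by
    field_simp
  rw [lhs_eq, rhs_eq]
  gcongr

/-- The Hilbert space version of van der Corput's estimate (Lemma 4.1 of the paper). -/
theorem stmt_9 {𝓗 : Type*} [NormedAddCommGroup 𝓗] [InnerProductSpace ℂ 𝓗]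
    (N : ℕ) (hN : 1 ≤ N) (v : ℕ → 𝓗)
    (hv1 : ∀ n : ℕ, 1 ≤ n → n ≤ N → ‖v n‖ ≤ 1)
    (hv2 : ∀ n : ℕ, N < n → v n = 0) :
    ∀ H : ℕ, 1 ≤ H → H ≤ N →
      ‖(N : ℝ)⁻¹ • ∑ n ∈ Finset.Icc 1 N, v n‖ ^ 2 ≤
        4 * ((H : ℝ)⁻¹ + (H : ℝ) / N +
          (H : ℝ)⁻¹ * ∑ h ∈ Finset.Icc 1 H,
            ‖(N : ℂ)⁻¹ * ∑ n ∈ Finset.Icc 1 N,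
              (inner ℂ (v (n + h)) (v n) : ℂ)‖) := by
  intro H hH1 hHN
  have hnorm : ∀ m : ℕ, 1 ≤ m → ‖v m‖ ≤ 1 := by
    intro m hm
    by_cases h : m ≤ N
    · exact hv1 m hm h
    · rw [hv2 m (by omega)]; simp
  set S : 𝓗 := ∑ n ∈ Icc 1 N, v n with hS
  set γ : ℕ → ℂ := fun d => ∑ n ∈ Icc 1 N, (inner ℂ (v (n + d)) (v n) : ℂ) with hγ
  set Γ : ℝ := ∑ d ∈ Icc 1 H, ‖γ d‖ with hΓ
  set u : ℕ → 𝓗 := fun n => ∑ h ∈ Icc 1 H, v (n + h) with hu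
  set T : 𝓗 := ∑ n ∈ range N, u n with hT
  have hHpos : (0:ℝ) < H := by exact_mod_cast hH1
  have hNpos : (0:ℝ) < N := by exact_mod_cast hN
  have hHN' : (H:ℝ) ≤ N := by exact_mod_cast hHN
  have hΓ0 : 0 ≤ Γ := Finset.sum_nonneg fun d _ => norm_nonneg _
  -- Step 1 : H ‖S‖ ≤ ‖T‖ + H^2
  have step1 : (H:ℝ) * ‖S‖ ≤ ‖T‖ + (H:ℝ)^2 := by
    have hT' : T = (H:ℝ) • S - ∑ h ∈ Icc 1 H, ∑ m ∈ Ico 1 h, v m := by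
      rw [hT, Finset.sum_comm]
      rw [Finset.sum_congr rfl fun h hh => sum_shift' N v hv2
        (by simp [Finset.mem_Icc] at hh; omega) (by simp [Finset.mem_Icc] at hh; omega)]
      rw [Finset.sum_sub_distrib, Finset.sum_const, Nat.card_Icc]
      simp [hS, Nat.cast_smul_eq_nsmul]
    have hsplit : (H:ℝ) • S = T + ∑ h ∈ Icc 1 H, ∑ m ∈ Ico 1 h, v m := by
      rw [hT']; abel
    calc (H:ℝ) * ‖S‖ = ‖(H:ℝ) • S‖ := by
          rw [norm_smul]; simp [abs_of_nonneg hHpos.le]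
      _ ≤ ‖T‖ + ‖∑ h ∈ Icc 1 H, ∑ m ∈ Ico 1 h, v m‖ := by rw [hsplit]; exact norm_add_le _ _
      _ ≤ ‖T‖ + (H:ℝ)^2 := by
        gcongr
        calc ‖∑ h ∈ Icc 1 H, ∑ m ∈ Ico 1 h, v m‖ ≤ ∑ h ∈ Icc 1 H, ‖∑ m ∈ Ico 1 h, v m‖ :=
              norm_sum_le _ _
          _ ≤ ∑ h ∈ Icc 1 H, (H:ℝ) := by
            refine Finset.sum_le_sum fun h hh => ?_
            calc ‖∑ m ∈ Ico 1 h, v m‖ ≤ ∑ m ∈ Ico 1 h, ‖v m‖ := norm_sum_le _ _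
              _ ≤ ∑ m ∈ Ico 1 h, (1:ℝ) := by
                refine Finset.sum_le_sum fun m hm => hnorm m ?_
                simp [Finset.mem_Ico] at hm; omega
              _ ≤ (H:ℝ) := by
                simp only [Finset.sum_const, Nat.card_Ico, nsmul_eq_mul, mul_one]
                simp only [Finset.mem_Icc] at hh
                have : h - 1 ≤ H := by omega
                exact_mod_cast this
          _ = (H:ℝ)^2 := by
            rw [Finset.sum_const, Nat.card_Icc, Nat.add_sub_cancel, nsmul_eq_mul, sq]
  -- core estimate
  have core : ∀ m₀ d : ℕ, 1 ≤ m₀ → m₀ ≤ H → 1 ≤ d →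
      ‖∑ n ∈ range N, (inner ℂ (v (n + m₀ + d)) (v (n + m₀)) : ℂ)‖ ≤ ‖γ d‖ + (H:ℝ) := by
    intro m₀ d h1 h2 hd
    have hw : ∀ m, N < m → (inner ℂ (v (m + d)) (v m) : ℂ) = 0 := fun m hm => by
      rw [hv2 m hm, inner_zero_right]
    have key := sum_shift' N (fun m => (inner ℂ (v (m + d)) (v m) : ℂ)) hw h1 (by omega)
    calc ‖∑ n ∈ range N, (inner ℂ (v (n + m₀ + d)) (v (n + m₀)) : ℂ)‖
        = ‖γ d - ∑ m ∈ Ico 1 m₀, (inner ℂ (v (m + d)) (v m) : ℂ)‖ := by rw [← key]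
      _ ≤ ‖γ d‖ + ‖∑ m ∈ Ico 1 m₀, (inner ℂ (v (m + d)) (v m) : ℂ)‖ := norm_sub_le _ _
      _ ≤ ‖γ d‖ + (H:ℝ) := by
        gcongr
        calc ‖∑ m ∈ Ico 1 m₀, (inner ℂ (v (m + d)) (v m) : ℂ)‖
            ≤ ∑ m ∈ Ico 1 m₀, ‖(inner ℂ (v (m + d)) (v m) : ℂ)‖ := norm_sum_le _ _
          _ ≤ ∑ m ∈ Ico 1 m₀, (1:ℝ) := by
            refine Finset.sum_le_sum fun m hm => ?_
            simp only [Finset.mem_Ico] at hm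
            calc ‖(inner ℂ (v (m + d)) (v m) : ℂ)‖ ≤ ‖v (m + d)‖ * ‖v m‖ := norm_inner_le_norm _ _
              _ ≤ 1 * 1 := by
                refine mul_le_mul (hnorm _ (by omega)) (hnorm _ (by omega)) (norm_nonneg _) zero_le_one
              _ = 1 := by ring
          _ ≤ (H:ℝ) := by
            simp only [Finset.sum_const, Nat.card_Ico, nsmul_eq_mul, mul_one]
            have : m₀ - 1 ≤ H := by omega
            exact_mod_cast this
  -- A h h'
  set A : ℕ → ℕ → ℝ := fun h h' =>
    Complex.re (∑ n ∈ range N, (inner ℂ (v (n + h)) (v (n + h')) : ℂ)) with hA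
  have hAs : ∀ h h', A h h' = ∑ n ∈ range N, Complex.re (inner ℂ (v (n + h)) (v (n + h')) : ℂ) := by
    intro h h'
    rw [hA]
    exact Complex.re_sum _ _
  have expand : ∑ n ∈ range N, ‖u n‖^2 = ∑ h ∈ Icc 1 H, ∑ h' ∈ Icc 1 H, A h h' := by
    have inner_eq : ∀ n, (inner ℂ (u n) (u n) : ℂ)
        = ∑ h ∈ Icc 1 H, ∑ h' ∈ Icc 1 H, (inner ℂ (v (n + h)) (v (n + h')) : ℂ) := by
      intro n
      rw [hu]
      rw [sum_inner]
      exact Finset.sum_congr rfl fun h _ => inner_sum _ _ _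
    have norm_eq : ∀ n, ‖u n‖^2
        = ∑ h ∈ Icc 1 H, ∑ h' ∈ Icc 1 H, Complex.re (inner ℂ (v (n + h)) (v (n + h')) : ℂ) := by
      intro n
      rw [← inner_self_eq_norm_sq (𝕜 := ℂ) (u n), inner_eq n]
      simp only [RCLike.re_to_complex, Complex.re_sum]
    rw [Finset.sum_congr rfl fun n _ => norm_eq n]
    rw [Finset.sum_comm]
    refine Finset.sum_congr rfl fun h _ => ?_
    rw [Finset.sum_comm]
    refine Finset.sum_congr rfl fun h' _ => ?_
    exact (hAs h h').symm
  -- diagonal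
  have diag : ∀ h, 1 ≤ h → A h h ≤ (N:ℝ) := by
    intro h hh
    rw [hAs]
    calc ∑ n ∈ range N, Complex.re (inner ℂ (v (n + h)) (v (n + h)) : ℂ)
        = ∑ n ∈ range N, ‖v (n + h)‖^2 := by
          refine Finset.sum_congr rfl fun n _ => ?_
          have := inner_self_eq_norm_sq (𝕜 := ℂ) (v (n + h))
          simpa using this
      _ ≤ ∑ n ∈ range N, (1:ℝ) := by
          refine Finset.sum_le_sum fun n _ => ?_
          have := hnorm (n + h) (by omega)
          nlinarith [norm_nonneg (v (n + h))]
      _ = (N:ℝ) := by simp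
  -- off-diagonal
  have offd : ∀ h ∈ Icc 1 H, ∀ h' ∈ Icc 1 H, h ≠ h' →
      A h h' ≤ ‖γ (max h h' - min h h')‖ + (H:ℝ) := by
    intro h hh h' hh' hne
    simp only [Finset.mem_Icc] at hh hh'
    have habs : A h h' ≤ ‖∑ n ∈ range N, (inner ℂ (v (n + h)) (v (n + h')) : ℂ)‖ := by
      rw [hA]
      exact (le_abs_self _).trans (Complex.abs_re_le_norm _)
    rcases lt_or_gt_of_ne hne with hlt | hgt
    · have e : ∑ n ∈ range N, (inner ℂ (v (n + h)) (v (n + h')) : ℂ)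
          = (starRingEnd ℂ) (∑ n ∈ range N, (inner ℂ (v (n + h + (h' - h))) (v (n + h)) : ℂ)) := by
        rw [map_sum]
        refine Finset.sum_congr rfl fun n _ => ?_
        rw [inner_conj_symm]
        congr 2
        omega
      have hc := core h (h' - h) hh.1 hh.2 (by omega)
      have emax : max h h' - min h h' = h' - h := by omega
      rw [emax]
      refine habs.trans ?_
      rw [e, RCLike.norm_conj]
      exact hc
    · have e : ∑ n ∈ range N, (inner ℂ (v (n + h)) (v (n + h')) : ℂ)
          = ∑ n ∈ range N, (inner ℂ (v (n + h' + (h - h'))) (v (n + h')) : ℂ) := by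
        refine Finset.sum_congr rfl fun n _ => ?_
        congr 2
        omega
      have hc := core h' (h - h') hh'.1 hh'.2 (by omega)
      have emax : max h h' - min h h' = h - h' := by omega
      rw [emax]
      refine habs.trans ?_
      rw [e]
      exact hc
  -- sum of |γ| over erase
  have erase_sum : ∀ h ∈ Icc 1 H,
      ∑ h' ∈ (Icc 1 H).erase h, ‖γ (max h h' - min h h')‖ ≤ 2 * Γ := by
    intro h hh
    simp only [Finset.mem_Icc] at hh
    have split := Finset.sum_filter_add_sum_filter_not ((Icc 1 H).erase h) (fun x => x < h)
      (fun h' => ‖γ (max h h' - min h h')‖)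
    rw [← split]
    have b1 : ∑ h' ∈ ((Icc 1 H).erase h).filter (fun x => x < h), ‖γ (max h h' - min h h')‖
        ≤ Γ := by
      have e : ∀ h' ∈ ((Icc 1 H).erase h).filter (fun x => x < h),
          ‖γ (max h h' - min h h')‖ = ‖γ (h - h')‖ := by
        intro h' hm
        simp only [Finset.mem_filter, Finset.mem_erase, Finset.mem_Icc] at hm
        congr 2
        omega
      rw [Finset.sum_congr rfl e, hΓ]
      refine inj_sum_le _ (fun x => h - x) ?_ ?_ (fun d _ => norm_nonneg _)
      · intro x hx y hy hxy
        simp only [Finset.mem_filter, Finset.mem_erase, Finset.mem_Icc] at hx hy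
        omega
      · intro x hx
        simp only [Finset.mem_filter, Finset.mem_erase, Finset.mem_Icc] at hx
        simp only [Finset.mem_Icc]
        omega
    have b2 : ∑ h' ∈ ((Icc 1 H).erase h).filter (fun x => ¬ x < h),
        ‖γ (max h h' - min h h')‖ ≤ Γ := by
      have e : ∀ h' ∈ ((Icc 1 H).erase h).filter (fun x => ¬ x < h),
          ‖γ (max h h' - min h h')‖ = ‖γ (h' - h)‖ := by
        intro h' hm
        simp only [Finset.mem_filter, Finset.mem_erase, Finset.mem_Icc] at hm
        congr 2
        omega
      rw [Finset.sum_congr rfl e, hΓ]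
      refine inj_sum_le _ (fun x => x - h) ?_ ?_ (fun d _ => norm_nonneg _)
      · intro x hx y hy hxy
        simp only [Finset.mem_filter, Finset.mem_erase, Finset.mem_Icc] at hx hy
        omega
      · intro x hx
        simp only [Finset.mem_filter, Finset.mem_erase, Finset.mem_Icc] at hx
        simp only [Finset.mem_Icc]
        omega
    linarith
  -- Step 6 : double-sum bound
  have step6 : ∑ h ∈ Icc 1 H, ∑ h' ∈ Icc 1 H, A h h'
      ≤ (H:ℝ) * N + (H:ℝ)^3 + 2 * H * Γ := by
    have per : ∀ h ∈ Icc 1 H, ∑ h' ∈ Icc 1 H, A h h' ≤ (N:ℝ) + ((H:ℝ)^2 + 2 * Γ) := by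
      intro h hh
      rw [← Finset.add_sum_erase _ _ hh]
      have b1 : ∑ h' ∈ (Icc 1 H).erase h, A h h'
          ≤ ∑ h' ∈ (Icc 1 H).erase h, (‖γ (max h h' - min h h')‖ + (H:ℝ)) := by
        refine Finset.sum_le_sum fun h' hm => ?_
        have hm' := Finset.mem_of_mem_erase hm
        exact offd h hh h' hm' (Finset.ne_of_mem_erase hm).symm
      have b2 : ∑ h' ∈ (Icc 1 H).erase h, (‖γ (max h h' - min h h')‖ + (H:ℝ))
          ≤ 2 * Γ + (H:ℝ)^2 := by
        rw [Finset.sum_add_distrib, Finset.sum_const]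
        have hcard : ((Icc 1 H).erase h).card ≤ H := by
          calc ((Icc 1 H).erase h).card ≤ (Icc 1 H).card := Finset.card_erase_le
            _ = H := by simp
        have hc2 : (((Icc 1 H).erase h).card : ℝ) * (H:ℝ) ≤ (H:ℝ)^2 := by
          rw [sq]
          have : (((Icc 1 H).erase h).card : ℝ) ≤ (H:ℝ) := by exact_mod_cast hcard
          nlinarith
        have he := erase_sum h hh
        simp only [nsmul_eq_mul]
        linarith
      have hd : A h h ≤ (N:ℝ) := diag h (by simp only [Finset.mem_Icc] at hh; omega)
      linarith
    calc ∑ h ∈ Icc 1 H, ∑ h' ∈ Icc 1 H, A h h'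
        ≤ ∑ h ∈ Icc 1 H, ((N:ℝ) + ((H:ℝ)^2 + 2 * Γ)) := Finset.sum_le_sum per
      _ = (H:ℝ) * N + (H:ℝ)^3 + 2 * H * Γ := by
          rw [Finset.sum_const, Nat.card_Icc, Nat.add_sub_cancel, nsmul_eq_mul]
          ring
  -- Step 2 : Cauchy-Schwarz
  have step2 : ‖T‖^2 ≤ (N:ℝ) * ∑ n ∈ range N, ‖u n‖^2 := by
    calc ‖T‖^2 ≤ (∑ n ∈ range N, ‖u n‖)^2 := by
          have h1 := norm_sum_le (range N) u
          have h0 : (0:ℝ) ≤ ‖T‖ := norm_nonneg _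
          have h2 : (0:ℝ) ≤ ∑ n ∈ range N, ‖u n‖ :=
            Finset.sum_nonneg fun n _ => norm_nonneg (u n)
          nlinarith
      _ ≤ (range N).card * ∑ n ∈ range N, ‖u n‖^2 := sq_sum_le_card_mul_sum_sq
      _ = (N:ℝ) * ∑ n ∈ range N, ‖u n‖^2 := by simp
  have tbound : ‖T‖^2 ≤ (N:ℝ) * ((H:ℝ) * N + (H:ℝ)^3 + 2 * H * Γ) := by
    refine step2.trans ?_
    have h6 := step6
    rw [expand]
    nlinarith
  -- assemble
  have rhs_abs : ∑ h ∈ Icc 1 H, ‖(N:ℂ)⁻¹ * ∑ n ∈ Icc 1 N,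
      (inner ℂ (v (n + h)) (v n) : ℂ)‖ = (N:ℝ)⁻¹ * Γ := by
    rw [hΓ, Finset.mul_sum]
    refine Finset.sum_congr rfl fun d _ => ?_
    rw [norm_mul, hγ]
    simp
  have lhs_norm : ‖(N:ℝ)⁻¹ • S‖^2 = ((N:ℝ)⁻¹ * ‖S‖)^2 := by
    rw [norm_smul, Real.norm_eq_abs, abs_of_nonneg (by positivity)]
  rw [rhs_abs, lhs_norm]
  exact vdc_arith ‖S‖ ‖T‖ Γ H N (norm_nonneg _) (norm_nonneg _) hΓ0
    (by exact_mod_cast hH1) (by exact_mod_cast hN) hHN' step1 tbound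
end

section
/- Let k < l be integers, let ρ > 0, and let f be a real-valued function that is twice differentiable on [k, l] and satisfies either f''(x) ≥ ρ for all x ∈ [k, l] or f''(x) ≤ −ρ for all x ∈ [k, l]. Then |Σ_{n=k}^{l} e(f(n))| ≤ (|f'(l) − f'(k)| + 2)·(4/√ρ + 3). -/
open Real Set

private lemma round_mono' : Monotone (round : ℝ → ℤ) := by
  intro x y hxy
  rw [round_eq, round_eq]
  exact Int.floor_mono (by linarith)

private lemma round_mem (x : ℝ) : (round x : ℝ) - 1/2 ≤ x ∧ x < (round x : ℝ) + 1/2 := by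
  have h := round_eq x
  have h1 := Int.floor_le (x + 1/2)
  have h2 := Int.lt_floor_add_one (x + 1/2)
  constructor <;> [skip; skip] <;> rw [h] <;> push_cast <;> linarith

private lemma sin_ge_of_mem (t δ : ℝ) (hδ : 0 < δ) (hδ' : δ ≤ 1/2)
    (h1 : δ ≤ t) (h2 : t ≤ 1 - δ) : 2*δ ≤ Real.sin (π * t) := by
  have hπ := Real.pi_pos
  rcases le_or_gt t (1/2) with h | h
  · have h0 := Real.mul_le_sin (x := π * t) (by nlinarith) (by nlinarith)
    have h3 : 2/π*(π*t) = 2*t := by field_simp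
    rw [h3] at h0; linarith
  · have heq : Real.sin (π * t) = Real.sin (π * (1 - t)) := by
      rw [show π * (1-t) = π - π * t by ring, Real.sin_pi_sub]
    rw [heq]
    have h0 := Real.mul_le_sin (x := π * (1 - t)) (by nlinarith) (by nlinarith)
    have h3 : 2/π*(π*(1-t)) = 2*(1-t) := by field_simp
    rw [h3] at h0; linarith

private lemma cot_antitone {a b : ℝ} (ha : 0 < a) (hab : a ≤ b) (hb : b < π) :
    Real.cos b / Real.sin b ≤ Real.cos a / Real.sin a := by
  have hsa : 0 < Real.sin a := Real.sin_pos_of_pos_of_lt_pi ha (lt_of_le_of_lt hab hb)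
  have hsb : 0 < Real.sin b := Real.sin_pos_of_pos_of_lt_pi (lt_of_lt_of_le ha hab) hb
  rw [div_le_div_iff₀ hsb hsa]
  have : Real.sin (b - a) ≥ 0 := Real.sin_nonneg_of_nonneg_of_le_pi (by linarith) (by linarith)
  rw [Real.sin_sub] at this
  nlinarith

example : True := trivial

private lemma one_sub_e_mul_w (t : ℝ) (h1 : 0 < t) (h2 : t < 1) :
    (1 - Complex.exp (2*(π:ℂ)*Complex.I*(t:ℂ))) *
      (((1/2 : ℝ) : ℂ) + ((Real.cos (π*t) / (2*Real.sin (π*t)) : ℝ) : ℂ) * Complex.I) = 1 := by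
  have hπ := Real.pi_pos
  have hs : 0 < Real.sin (π*t) :=
    Real.sin_pos_of_pos_of_lt_pi (by positivity) (by nlinarith)
  have hpy := Real.sin_sq_add_cos_sq (π*t)
  have he : (2*(π:ℂ)*Complex.I*(t:ℂ)) = ((2*π*t : ℝ) : ℂ) * Complex.I := by push_cast; ring
  rw [he, Complex.exp_mul_I, ← Complex.ofReal_cos, ← Complex.ofReal_sin,
    show (2*π*t) = 2*(π*t) by ring, Real.cos_two_mul, Real.sin_two_mul]
  set s := Real.sin (π*t)
  set c := Real.cos (π*t)
  have hC : (2*c^2 - 1 : ℝ) = 1 - 2*s^2 := by linarith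
  rw [hC]
  have hs' : (s:ℂ) ≠ 0 := Complex.ofReal_ne_zero.mpr hs.ne'
  have key : (1 - (((1-2*s^2 : ℝ):ℂ) + ((2*s*c:ℝ):ℂ)*Complex.I)) = 2*s*((s:ℂ) - (c:ℂ)*Complex.I) := by
    push_cast; ring
  have key2 : (((1/2:ℝ):ℂ) + ((c/(2*s):ℝ):ℂ)*Complex.I) = ((s:ℂ) + (c:ℂ)*Complex.I)/(2*(s:ℂ)) := by
    push_cast; field_simp
  rw [key, key2]
  field_simp
  have hpyC : (s:ℂ)^2 + (c:ℂ)^2 = 1 := by exact_mod_cast congrArg Complex.ofReal hpy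
  linear_combination hpyC - (c:ℂ)^2 * Complex.I_sq

private lemma abel_id (A w : ℕ → ℂ) (M : ℕ) :
    ∑ i ∈ Finset.range (M+1), (A i - A (i+1)) * w i
      = A 0 * w 0 + (∑ i ∈ Finset.range M, A (i+1) * (w (i+1) - w i)) - A (M+1) * w M := by
  induction M with
  | zero => simp; ring
  | succ n ih => rw [Finset.sum_range_succ, ih, Finset.sum_range_succ]; ring

private lemma abs_exp_eq_one (x : ℝ) : ‖Complex.exp (2*(π:ℂ)*Complex.I*(x:ℂ))‖ = 1 := by
  rw [Complex.norm_exp]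
  have : (2*(π:ℂ)*Complex.I*(x:ℂ)).re = 0 := by simp [Complex.mul_re]
  rw [this, Real.exp_zero]

private lemma kl (M : ℕ) (F : ℕ → ℝ) (δ : ℝ) (hδ : 0 < δ) (hδ' : δ ≤ 1/2) (c : ℤ)
    (hmem : ∀ i, i < M → δ ≤ F (i+1) - F i - c ∧ F (i+1) - F i - c ≤ 1 - δ)
    (hmono : ∀ i, i + 1 < M → F (i+1) - F i ≤ F (i+2) - F (i+1)) :
    ‖∑ i ∈ Finset.range (M+1), Complex.exp (2*(π:ℂ)*Complex.I*(F i : ℂ))‖ ≤ 1 + 1/δ := by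
  have hδinv : (0:ℝ) ≤ 1/δ := by positivity
  rcases Nat.eq_zero_or_pos M with hM | hM
  · subst hM
    simp only [zero_add, Finset.range_one, Finset.sum_singleton, abs_exp_eq_one]
    linarith
  obtain ⟨m, rfl⟩ : ∃ m, M = m + 1 := ⟨M - 1, (Nat.succ_pred_eq_of_pos hM).symm⟩
  set A : ℕ → ℂ := fun i => Complex.exp (2*(π:ℂ)*Complex.I*(F i : ℂ)) with hA
  set t : ℕ → ℝ := fun i => F (i+1) - F i - c with ht
  set g : ℕ → ℝ := fun i => Real.cos (π * t i) / (2 * Real.sin (π * t i)) with hg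
  set w : ℕ → ℂ := fun i => ((1/2 : ℝ) : ℂ) + ((g i : ℝ) : ℂ) * Complex.I with hw
  -- basic facts about t
  have ht1 : ∀ i, i < m+1 → δ ≤ t i := fun i hi => (hmem i hi).1
  have ht2 : ∀ i, i < m+1 → t i ≤ 1 - δ := fun i hi => (hmem i hi).2
  have htpos : ∀ i, i < m+1 → 0 < t i := fun i hi => lt_of_lt_of_le hδ (ht1 i hi)
  have htlt : ∀ i, i < m+1 → t i < 1 := fun i hi => by have := ht2 i hi; linarith
  have hsin : ∀ i, i < m+1 → 2*δ ≤ Real.sin (π * t i) := fun i hi =>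
    sin_ge_of_mem (t i) δ hδ hδ' (ht1 i hi) (ht2 i hi)
  -- the key identity A i = (A i - A (i+1)) * w i
  have hkey : ∀ i, i < m+1 → A i = (A i - A (i+1)) * w i := by
    intro i hi
    have hstep : A (i+1) = A i * Complex.exp (2*(π:ℂ)*Complex.I*(t i : ℂ)) := by
      have hF : (F (i+1) : ℝ) = F i + t i + c := by simp [ht]; ring
      simp only [hA]
      rw [hF, ← Complex.exp_add]
      rw [show (2*(π:ℂ)*Complex.I*((F i + t i + c : ℝ):ℂ))
            = 2*(π:ℂ)*Complex.I*(F i:ℂ) + 2*(π:ℂ)*Complex.I*(t i:ℂ) + (c:ℂ)*(2*(π:ℂ)*Complex.I)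
          by push_cast; ring]
      rw [Complex.exp_add, Complex.exp_int_mul_two_pi_mul_I, mul_one]
    have hid := one_sub_e_mul_w (t i) (htpos i hi) (htlt i hi)
    calc A i = A i * ((1 - Complex.exp (2*(π:ℂ)*Complex.I*(t i:ℂ))) *
          (((1/2 : ℝ) : ℂ) + ((Real.cos (π*t i) / (2*Real.sin (π*t i)) : ℝ) : ℂ) * Complex.I)) := by
            rw [hid, mul_one]
      _ = (A i - A (i+1)) * w i := by rw [hstep, hw, hg]; simp only; ring
  -- rewrite the sum
  have hsum : ∑ i ∈ Finset.range (m+1+1), A i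
      = A 0 * w 0 + (∑ i ∈ Finset.range m, A (i+1) * (w (i+1) - w i)) - A (m+1) * w m + A (m+1) := by
    rw [Finset.sum_range_succ, ← abel_id A w m]
    congr 1
    exact Finset.sum_congr rfl fun i hi => hkey i (Finset.mem_range.mp hi)
  rw [hsum]
  -- bounds
  have habsA : ∀ i, ‖A i‖ = 1 := fun i => abs_exp_eq_one (F i)
  have habsw : ∀ i, i < m+1 → ‖w i‖ ≤ 1/(4*δ) := by
    intro i hi
    rw [hw]; simp only
    rw [Complex.norm_add_mul_I]
    have hs := hsin i hi
    have hs0 : 0 < Real.sin (π * t i) := lt_of_lt_of_le (by positivity) hs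
    have hpy := Real.sin_sq_add_cos_sq (π * t i)
    have h1 : ((1:ℝ)/2)^2 + (g i)^2 = 1/(4 * Real.sin (π * t i)^2) := by
      rw [hg]; simp only; field_simp; nlinarith
    rw [h1]
    rw [show 1/(4 * Real.sin (π * t i)^2) = (1/(2*Real.sin (π * t i)))^2 by field_simp; ring]
    rw [Real.sqrt_sq (by positivity)]
    rw [div_le_div_iff₀ (by positivity) (by positivity)]
    nlinarith
  have hcot : ∀ i, i < m+1 → |g i| ≤ 1/(4*δ) := by
    intro i hi
    have hs := hsin i hi
    have hs0 : 0 < Real.sin (π * t i) := lt_of_lt_of_le (by positivity) hs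
    rw [hg]; simp only [abs_div]
    rw [abs_of_pos (by positivity : (0:ℝ) < 2*Real.sin (π * t i))]
    rw [div_le_div_iff₀ (by positivity) (by positivity)]
    have := Real.abs_cos_le_one (π * t i)
    nlinarith
  have hgmono : ∀ i, i + 1 < m+1 → g (i+1) ≤ g i := by
    intro i hi
    have htm : t i ≤ t (i+1) := by
      have := hmono i hi
      rw [ht]; simp only; linarith
    have h1 : 0 < π * t i := by
      have := htpos i (by omega); have := Real.pi_pos; positivity
    have h2 : π * t i ≤ π * t (i+1) :=
      mul_le_mul_of_nonneg_left htm Real.pi_pos.le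
    have h3 : π * t (i+1) < π := by
      have := htlt (i+1) (by omega); nlinarith [Real.pi_pos]
    have := cot_antitone h1 h2 h3
    rw [hg]; simp only
    rw [div_le_div_iff₀ (by
        have := Real.sin_pos_of_pos_of_lt_pi (lt_of_lt_of_le h1 h2) h3; linarith) (by
        have := Real.sin_pos_of_pos_of_lt_pi h1 (lt_of_le_of_lt h2 h3); linarith)]
    rw [div_le_div_iff₀ (Real.sin_pos_of_pos_of_lt_pi (lt_of_lt_of_le h1 h2) h3)
      (Real.sin_pos_of_pos_of_lt_pi h1 (lt_of_le_of_lt h2 h3))] at this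
    nlinarith
  -- sum of differences
  have hdiff : ∑ i ∈ Finset.range m, ‖A (i+1) * (w (i+1) - w i)‖ ≤ 1/(2*δ) := by
    have heach : ∀ i ∈ Finset.range m, ‖A (i+1) * (w (i+1) - w i)‖ = g i - g (i+1) := by
      intro i hi
      rw [Finset.mem_range] at hi
      rw [norm_mul, habsA, one_mul, hw]
      simp only
      rw [show (((1/2 : ℝ) : ℂ) + ((g (i+1) : ℝ) : ℂ) * Complex.I)
          - (((1/2 : ℝ) : ℂ) + ((g i : ℝ) : ℂ) * Complex.I)
          = ((g (i+1) - g i : ℝ) : ℂ) * Complex.I by push_cast; ring]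
      rw [norm_mul, Complex.norm_I, mul_one, Complex.norm_real, Real.norm_eq_abs]
      rw [abs_of_nonpos (by have := hgmono i (by omega); linarith)]
      ring
    rw [Finset.sum_congr rfl heach, Finset.sum_range_sub' g m]
    have h0 : |g 0| ≤ 1/(4*δ) := hcot 0 (by omega)
    have hm : |g m| ≤ 1/(4*δ) := hcot m (by omega)
    have : g 0 - g m ≤ 1/(4*δ) + 1/(4*δ) := by
      cases abs_le.mp h0; cases abs_le.mp hm; linarith
    linarith [this, show 1/(4*δ) + 1/(4*δ) = 1/(2*δ) by ring]
  -- final triangle inequality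
  calc ‖A 0 * w 0 + (∑ i ∈ Finset.range m, A (i+1) * (w (i+1) - w i)) - A (m+1) * w m + A (m+1)‖
      ≤ ‖A 0 * w 0 + (∑ i ∈ Finset.range m, A (i+1) * (w (i+1) - w i)) - A (m+1) * w m‖
        + ‖A (m+1)‖ := norm_add_le _ _
    _ ≤ ‖A 0 * w 0 + (∑ i ∈ Finset.range m, A (i+1) * (w (i+1) - w i))‖
        + ‖A (m+1) * w m‖ + ‖A (m+1)‖ := by
          have := norm_sub_le (A 0 * w 0 + (∑ i ∈ Finset.range m, A (i+1) * (w (i+1) - w i))) (A (m+1) * w m)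
          linarith
    _ ≤ ‖A 0 * w 0‖ + ‖∑ i ∈ Finset.range m, A (i+1) * (w (i+1) - w i)‖
        + ‖A (m+1) * w m‖ + ‖A (m+1)‖ := by
          have := norm_add_le (A 0 * w 0) (∑ i ∈ Finset.range m, A (i+1) * (w (i+1) - w i))
          linarith
    _ ≤ 1/(4*δ) + 1/(2*δ) + 1/(4*δ) + 1 := by
        have h1 : ‖A 0 * w 0‖ ≤ 1/(4*δ) := by
          rw [norm_mul, habsA, one_mul]; exact habsw 0 (by omega)
        have h2 : ‖A (m+1) * w m‖ ≤ 1/(4*δ) := by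
          rw [norm_mul, habsA, one_mul]; exact habsw m (by omega)
        have h3 : ‖∑ i ∈ Finset.range m, A (i+1) * (w (i+1) - w i)‖ ≤ 1/(2*δ) :=
          le_trans (norm_sum_le _ _) hdiff
        linarith [habsA (m+1), h1, h2, h3]
    _ ≤ 1 + 1/δ := by
        rw [show 1/(4*δ) + 1/(2*δ) + 1/(4*δ) = 1/δ by field_simp; ring]
        linarith

private lemma add_cast_inj (a : ℤ) : Function.Injective (fun i : ℕ => a + (i:ℤ)) :=
  fun i j h => by exact_mod_cast add_left_cancel h

private lemma Icc_int_eq_map (a b : ℤ) :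
    Finset.Icc a b = (Finset.range (b + 1 - a).toNat).map
      ⟨fun i : ℕ => a + (i:ℤ), add_cast_inj a⟩ := by
  ext n
  simp only [Finset.mem_Icc, Finset.mem_map, Finset.mem_range, Function.Embedding.coeFn_mk]
  constructor
  · intro h; exact ⟨(n - a).toNat, by omega, by omega⟩
  · rintro ⟨i, hi, rfl⟩; omega

private lemma Ioc_int_eq_Icc (a b : ℤ) : Finset.Ioc a b = Finset.Icc (a+1) b := by
  ext n
  simp only [Finset.mem_Ioc, Finset.mem_Icc]
  omega

private lemma threshold (a b : ℤ) (hab : a ≤ b) (P : ℤ → Prop) [DecidablePred P]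
    (hP : ∀ u v : ℤ, a ≤ u → u ≤ v → v ≤ b → P v → P u) :
    ∃ c, a - 1 ≤ c ∧ c ≤ b ∧ ∀ n, a ≤ n → n ≤ b → (P n ↔ n ≤ c) := by
  by_cases hne : ((Finset.Icc a b).filter P).Nonempty
  · set c := ((Finset.Icc a b).filter P).max' hne with hc
    have hcmem := ((Finset.Icc a b).filter P).max'_mem hne
    rw [Finset.mem_filter, Finset.mem_Icc] at hcmem
    refine ⟨c, by omega, hcmem.1.2, ?_⟩
    intro n h1 h2
    constructor
    · intro hPn
      exact Finset.le_max' _ n (by rw [Finset.mem_filter, Finset.mem_Icc]; exact ⟨⟨h1, h2⟩, hPn⟩)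
    · intro hnc
      exact hP n c h1 hnc hcmem.1.2 hcmem.2
  · refine ⟨a - 1, le_refl _, by omega, ?_⟩
    intro n h1 h2
    constructor
    · intro hPn
      exact absurd ⟨n, by rw [Finset.mem_filter, Finset.mem_Icc]; exact ⟨⟨h1, h2⟩, hPn⟩⟩ hne
    · omega

private lemma sum_Ioc_consec (G : ℤ → ℂ) (x y z : ℤ) (h1 : x ≤ y) (h2 : y ≤ z) :
    ∑ n ∈ Finset.Ioc x z, G n = ∑ n ∈ Finset.Ioc x y, G n + ∑ n ∈ Finset.Ioc y z, G n := by
  rw [← Finset.Ioc_union_Ioc_eq_Ioc h1 h2, Finset.sum_union]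
  rw [Finset.disjoint_left]
  intro n hn hn'
  rw [Finset.mem_Ioc] at hn hn'
  omega

set_option maxHeartbeats 2000000 in
private lemma main_incr (k l : ℤ) (hkl : k < l) (ρ : ℝ) (hρ : 0 < ρ)
    (f f' f'' : ℝ → ℝ)
    (hf' : ∀ x ∈ Set.Icc (k : ℝ) (l : ℝ), HasDerivWithinAt f (f' x) (Set.Icc (k : ℝ) (l : ℝ)) x)
    (hf'' : ∀ x ∈ Set.Icc (k : ℝ) (l : ℝ), HasDerivWithinAt f' (f'' x) (Set.Icc (k : ℝ) (l : ℝ)) x)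
    (hge : ∀ x ∈ Set.Icc (k : ℝ) (l : ℝ), ρ ≤ f'' x) :
    ‖∑ n ∈ Finset.Icc k l, Complex.exp (2 * Real.pi * Complex.I * (f n))‖ ≤
      (|f' l - f' k| + 2) * (4 / Real.sqrt ρ + 3) := by
  have hkl' : (k:ℝ) ≤ l := by exact_mod_cast hkl.le
  have hπ := Real.pi_pos
  set D := Set.Icc (k:ℝ) (l:ℝ) with hD
  have hconv : Convex ℝ D := convex_Icc _ _
  have hintD : interior D = Set.Ioo (k:ℝ) l := interior_Icc
  have hfc : ContinuousOn f D := fun x hx => (hf' x hx).continuousWithinAt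
  have hf'c : ContinuousOn f' D := fun x hx => (hf'' x hx).continuousWithinAt
  have hderiv : ∀ x ∈ Set.Ioo (k:ℝ) l, HasDerivAt f (f' x) x := fun x hx =>
    (hf' x (Set.Ioo_subset_Icc_self hx)).hasDerivAt (Icc_mem_nhds hx.1 hx.2)
  have hderiv2 : ∀ x ∈ Set.Ioo (k:ℝ) l, HasDerivAt f' (f'' x) x := fun x hx =>
    (hf'' x (Set.Ioo_subset_Icc_self hx)).hasDerivAt (Icc_mem_nhds hx.1 hx.2)
  have hf'd : DifferentiableOn ℝ f' (interior D) := by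
    rw [hintD]; exact fun x hx => (hderiv2 x hx).differentiableAt.differentiableWithinAt
  -- (A): strict growth of f'
  have hA : ∀ x ∈ D, ∀ y ∈ D, x ≤ y → ρ * (y - x) ≤ f' y - f' x := by
    apply Convex.mul_sub_le_image_sub_of_le_deriv hconv hf'c hf'd
    intro x hx
    rw [hintD] at hx
    rw [(hderiv2 x hx).deriv]
    exact hge x (Set.Ioo_subset_Icc_self hx)
  have hmono : ∀ x ∈ D, ∀ y ∈ D, x ≤ y → f' x ≤ f' y := by
    intro x hx y hy hxy
    nlinarith [hA x hx y hy hxy]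
  -- (B): convexity bounds for increments
  have hB : ∀ x ∈ D, ∀ y ∈ D, x ≤ y →
      f' x * (y - x) ≤ f y - f x ∧ f y - f x ≤ f' y * (y - x) := by
    intro x hx y hy hxy
    have hsub : Set.Icc x y ⊆ D := Set.Icc_subset_Icc hx.1 hy.2
    have hconv2 : Convex ℝ (Set.Icc x y) := convex_Icc _ _
    have hint2 : interior (Set.Icc x y) = Set.Ioo x y := interior_Icc
    have hsubI : Set.Ioo x y ⊆ Set.Ioo (k:ℝ) l := fun z hz =>
      ⟨lt_of_le_of_lt hx.1 hz.1, lt_of_lt_of_le hz.2 hy.2⟩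
    have hfc2 : ContinuousOn f (Set.Icc x y) := hfc.mono hsub
    have hfd2 : DifferentiableOn ℝ f (interior (Set.Icc x y)) := by
      rw [hint2]
      exact fun z hz => (hderiv z (hsubI hz)).differentiableAt.differentiableWithinAt
    constructor
    · refine Convex.mul_sub_le_image_sub_of_le_deriv hconv2 hfc2 hfd2 ?_ x
        (Set.left_mem_Icc.mpr hxy) y (Set.right_mem_Icc.mpr hxy) hxy
      intro z hz
      rw [hint2] at hz
      rw [(hderiv z (hsubI hz)).deriv]
      exact hmono x hx z (hsub (Set.Ioo_subset_Icc_self hz)) hz.1.le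
    · refine Convex.image_sub_le_mul_sub_of_deriv_le hconv2 hfc2 hfd2 ?_ x
        (Set.left_mem_Icc.mpr hxy) y (Set.right_mem_Icc.mpr hxy) hxy
      intro z hz
      rw [hint2] at hz
      rw [(hderiv z (hsubI hz)).deriv]
      exact hmono z (hsub (Set.Ioo_subset_Icc_self hz)) y hy hz.2.le
  -- integer casts
  have hmem : ∀ n : ℤ, k ≤ n → n ≤ l → ((n:ℝ)) ∈ D := by
    intro n h1 h2
    exact ⟨by exact_mod_cast h1, by exact_mod_cast h2⟩
  have hstep : ∀ n : ℤ, k ≤ n → n + 1 ≤ l →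
      f' (n:ℝ) ≤ f ((n+1 : ℤ):ℝ) - f (n:ℝ) ∧ f ((n+1:ℤ):ℝ) - f (n:ℝ) ≤ f' ((n+1:ℤ):ℝ) := by
    intro n h1 h2
    have h3 := hB (n:ℝ) (hmem n h1 (by omega)) ((n+1:ℤ):ℝ) (hmem (n+1) (by omega) h2)
      (by push_cast; linarith)
    have h4 : ((n+1:ℤ):ℝ) - (n:ℝ) = 1 := by push_cast; ring
    rw [h4] at h3
    constructor <;> nlinarith [h3.1, h3.2]
  -- δ
  set δ := min (Real.sqrt ρ) (1/2) with hδdef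
  have hsρ : 0 < Real.sqrt ρ := Real.sqrt_pos.mpr hρ
  have hδ : 0 < δ := lt_min hsρ one_half_pos
  have hδ' : δ ≤ 1/2 := min_le_right _ _
  set B : ℝ := 4 / Real.sqrt ρ + 3 with hBdef
  have hBpos : (0:ℝ) ≤ B := by positivity
  -- fiberwise decomposition
  have hmaps : ∀ n ∈ Finset.Icc k l,
      round (f' (n:ℝ)) ∈ Finset.Icc (round (f' (k:ℝ))) (round (f' (l:ℝ))) := by
    intro n hn
    rw [Finset.mem_Icc] at hn ⊢
    constructor
    · exact round_mono' (hmono (k:ℝ) (hmem k le_rfl hkl.le) (n:ℝ) (hmem n hn.1 hn.2)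
        (by exact_mod_cast hn.1))
    · exact round_mono' (hmono (n:ℝ) (hmem n hn.1 hn.2) (l:ℝ) (hmem l hkl.le le_rfl)
        (by exact_mod_cast hn.2))
  rw [← Finset.sum_fiberwise_of_maps_to hmaps
    (fun n : ℤ => Complex.exp (2 * Real.pi * Complex.I * (f (n:ℝ))))]
  refine le_trans (norm_sum_le _ _) ?_
  -- the per-fiber bound
  have hfiber : ∀ m ∈ Finset.Icc (round (f' (k:ℝ))) (round (f' (l:ℝ))),
      ‖∑ n ∈ (Finset.Icc k l).filter (fun n : ℤ => round (f' (n:ℝ)) = m),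
        Complex.exp (2 * Real.pi * Complex.I * (f (n:ℝ)))‖ ≤ B := by
    intro m _
    set Fib := (Finset.Icc k l).filter (fun n : ℤ => round (f' (n:ℝ)) = m) with hFib
    rcases Fib.eq_empty_or_nonempty with hne | hne
    · rw [hne]; simpa using hBpos
    set a := Fib.min' hne with ha
    set b := Fib.max' hne with hbdef
    have hamem : (k ≤ a ∧ a ≤ l) ∧ round (f' (a:ℝ)) = m := by
      have h0 : a ∈ Finset.filter (fun n : ℤ => round (f' (n:ℝ)) = m) (Finset.Icc k l) :=
        Fib.min'_mem hne
      rwa [Finset.mem_filter, Finset.mem_Icc] at h0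
    have hbmem : (k ≤ b ∧ b ≤ l) ∧ round (f' (b:ℝ)) = m := by
      have h0 : b ∈ Finset.filter (fun n : ℤ => round (f' (n:ℝ)) = m) (Finset.Icc k l) :=
        Fib.max'_mem hne
      rwa [Finset.mem_filter, Finset.mem_Icc] at h0
    have hab : a ≤ b := Fib.min'_le b (Fib.max'_mem hne)
    have hFeq : Fib = Finset.Icc a b := by
      ext n
      rw [hFib, Finset.mem_filter, Finset.mem_Icc, Finset.mem_Icc]
      constructor
      · intro hn
        exact ⟨Fib.min'_le n (by rw [hFib, Finset.mem_filter, Finset.mem_Icc]; exact hn),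
          Fib.le_max' n (by rw [hFib, Finset.mem_filter, Finset.mem_Icc]; exact hn)⟩
      · intro hn
        have hk1 : k ≤ n := le_trans hamem.1.1 hn.1
        have hl1 : n ≤ l := le_trans hn.2 hbmem.1.2
        refine ⟨⟨hk1, hl1⟩, ?_⟩
        have h1 : round (f' ((a:ℤ):ℝ)) ≤ round (f' (n:ℝ)) :=
          round_mono' (hmono _ (hmem a hamem.1.1 (le_trans hab hbmem.1.2)) _
            (hmem n hk1 hl1) (by exact_mod_cast hn.1))
        have h2 : round (f' (n:ℝ)) ≤ round (f' ((b:ℤ):ℝ)) :=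
          round_mono' (hmono _ (hmem n hk1 hl1) _
            (hmem b (le_trans hamem.1.1 hab) hbmem.1.2) (by exact_mod_cast hn.2))
        rw [hamem.2] at h1
        rw [hbmem.2] at h2
        omega
    -- window
    have hwin : ∀ n : ℤ, a ≤ n → n ≤ b →
        (m:ℝ) - 1/2 ≤ f' (n:ℝ) ∧ f' (n:ℝ) < (m:ℝ) + 1/2 := by
      intro n h1 h2
      have hnmem : n ∈ Fib := by rw [hFeq, Finset.mem_Icc]; exact ⟨h1, h2⟩
      rw [hFib, Finset.mem_filter] at hnmem
      have := round_mem (f' (n:ℝ))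
      rw [hnmem.2] at this
      exact ⟨by linarith [this.1], by linarith [this.2]⟩
    have haD : k ≤ a := hamem.1.1
    have hbD : b ≤ l := hbmem.1.2
    have hmemab : ∀ n : ℤ, a ≤ n → n ≤ b → ((n:ℝ)) ∈ D :=
      fun n h1 h2 => hmem n (le_trans haD h1) (le_trans h2 hbD)
    -- thresholds
    obtain ⟨p, hp1, hp2, hp⟩ := threshold a b hab (fun n => f' (n:ℝ) < (m:ℝ) - δ)
      (fun u v h1 h2 h3 hv => lt_of_le_of_lt
        (hmono _ (hmemab u h1 (le_trans h2 h3)) _ (hmemab v (le_trans h1 h2) h3)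
          (by exact_mod_cast h2)) hv)
    obtain ⟨q, hq1, hq2, hq⟩ := threshold a b hab (fun n => f' (n:ℝ) ≤ (m:ℝ) + δ)
      (fun u v h1 h2 h3 hv => le_trans
        (hmono _ (hmemab u h1 (le_trans h2 h3)) _ (hmemab v (le_trans h1 h2) h3)
          (by exact_mod_cast h2)) hv)
    have hpq : p ≤ q := by
      rcases le_or_gt a p with h | h
      · have := (hp p h hp2).mpr le_rfl
        exact (hq p h hp2).mp (by linarith)
      · omega
    -- split the sum
    have hsplit : ∑ n ∈ Finset.Icc a b, Complex.exp (2 * Real.pi * Complex.I * (f (n:ℝ)))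
        = (∑ n ∈ Finset.Icc a p, Complex.exp (2 * Real.pi * Complex.I * (f (n:ℝ))))
        + (∑ n ∈ Finset.Icc (p+1) q, Complex.exp (2 * Real.pi * Complex.I * (f (n:ℝ))))
        + (∑ n ∈ Finset.Icc (q+1) b, Complex.exp (2 * Real.pi * Complex.I * (f (n:ℝ)))) := by
      have e1 := sum_Ioc_consec
        (fun n : ℤ => Complex.exp (2 * Real.pi * Complex.I * (f (n:ℝ))))
        (a-1) p q (by omega) (by omega)
      have e2 := sum_Ioc_consec
        (fun n : ℤ => Complex.exp (2 * Real.pi * Complex.I * (f (n:ℝ))))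
        (a-1) q b (by omega) (by omega)
      rw [e1] at e2
      rw [Ioc_int_eq_Icc (a-1) b, Ioc_int_eq_Icc (a-1) p, Ioc_int_eq_Icc p q,
        Ioc_int_eq_Icc q b, show a - 1 + 1 = a by ring] at e2
      exact e2
    rw [hFeq, hsplit]
    -- notation
    set SL := ∑ n ∈ Finset.Icc a p, Complex.exp (2 * Real.pi * Complex.I * (f (n:ℝ))) with hSL
    set SM := ∑ n ∈ Finset.Icc (p+1) q, Complex.exp (2 * Real.pi * Complex.I * (f (n:ℝ))) with hSM
    set SR := ∑ n ∈ Finset.Icc (q+1) b, Complex.exp (2 * Real.pi * Complex.I * (f (n:ℝ))) with hSR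
    -- middle bound
    have hmid : ‖SM‖ ≤ 2*δ/ρ + 1 := by
      refine le_trans (norm_sum_le _ _) ?_
      have hones : ∀ n ∈ Finset.Icc (p+1) q,
          ‖Complex.exp (2 * Real.pi * Complex.I * (f (n:ℝ)))‖ = 1 :=
        fun n _ => abs_exp_eq_one _
      rw [Finset.sum_congr rfl hones, Finset.sum_const, nsmul_eq_mul, mul_one, Int.card_Icc]
      have h2δ : (0:ℝ) ≤ 2*δ/ρ := by positivity
      rcases le_or_gt q (p+1) with h | h
      · have h1 : (q + 1 - (p+1)).toNat ≤ 1 := by omega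
        calc ((q + 1 - (p+1)).toNat : ℝ) ≤ 1 := by exact_mod_cast h1
          _ ≤ 2*δ/ρ + 1 := by linarith
      · have hq' : f' ((q:ℤ):ℝ) ≤ (m:ℝ) + δ := (hq q (by omega) hq2).mpr le_rfl
        have hp' : ¬ (f' (((p+1):ℤ):ℝ) < (m:ℝ) - δ) := by
          intro hcon
          have := (hp (p+1) (by omega) (by omega)).mp hcon
          omega
        push_neg at hp'
        have hAineq := hA (((p+1):ℤ):ℝ) (hmemab (p+1) (by omega) (by omega)) ((q:ℤ):ℝ)
          (hmemab q (by omega) (by omega)) (by exact_mod_cast (by omega : (p+1:ℤ) ≤ q))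
        have hcount : ρ * ((q:ℝ) - ((p:ℝ) + 1)) ≤ 2*δ := by push_cast at hAineq hp' hq'; linarith
        have hdiv : (q:ℝ) - (p:ℝ) - 1 ≤ 2*δ/ρ := (le_div_iff₀ hρ).mpr (by linarith)
        have hcast : ((q + 1 - (p+1)).toNat : ℝ) = (q:ℝ) - (p:ℝ) := by
          have h0 : (0:ℤ) ≤ q + 1 - (p+1) := by omega
          have := congrArg (fun z : ℤ => (z:ℝ)) (Int.toNat_of_nonneg h0)
          push_cast at this ⊢
          linarith
        rw [hcast]
        linarith
    -- left bound via Kusmin–Landau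
    have hLb : a ≤ p → ‖SL‖ ≤ 1 + 1/δ := by
      intro hap
      obtain ⟨M, hMN⟩ : ∃ M, (p + 1 - a).toNat = M + 1 := ⟨(p - a).toNat, by omega⟩
      rw [hSL, Icc_int_eq_map a p, Finset.sum_map]
      simp only [Function.Embedding.coeFn_mk]
      rw [hMN]
      refine kl M (fun i : ℕ => f (((a + (i:ℤ)):ℤ):ℝ)) δ hδ hδ' (m - 1) ?_ ?_
      · intro i hi
        have hidx1 : a + ((i:ℕ)+1 : ℕ) = (a + (i:ℤ)) + 1 := by push_cast; ring
        have hn1 : a ≤ a + (i:ℤ) := by omega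
        have hn2 : a + (i:ℤ) + 1 ≤ p := by omega
        have hs := hstep (a + (i:ℤ)) (by omega) (by omega)
        have hw := hwin (a + (i:ℤ)) hn1 (by omega)
        have hpp := (hp (a + (i:ℤ) + 1) (by omega) (by omega)).mpr (by omega)
        simp only [hidx1]
        push_cast at hs hw hpp ⊢
        constructor
        · linarith [hs.1, hw.1]
        · linarith [hs.2, hpp]
      · intro i hi
        have hidx1 : a + ((i:ℕ)+1 : ℕ) = (a + (i:ℤ)) + 1 := by push_cast; ring
        have hidx2 : a + ((i:ℕ)+2 : ℕ) = (a + (i:ℤ)) + 1 + 1 := by push_cast; ring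
        have hs1 := hstep (a + (i:ℤ)) (by omega) (by omega)
        have hs2 := hstep (a + (i:ℤ) + 1) (by omega) (by omega)
        simp only [hidx1, hidx2]
        push_cast at hs1 hs2 ⊢
        linarith [hs1.2, hs2.1]
    -- right bound via Kusmin–Landau
    have hRb : q + 1 ≤ b → ‖SR‖ ≤ 1 + 1/δ := by
      intro hqb
      obtain ⟨M, hMN⟩ : ∃ M, (b + 1 - (q+1)).toNat = M + 1 := ⟨(b - (q+1)).toNat, by omega⟩
      rw [hSR, Icc_int_eq_map (q+1) b, Finset.sum_map]
      simp only [Function.Embedding.coeFn_mk]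
      rw [hMN]
      refine kl M (fun i : ℕ => f ((((q+1) + (i:ℤ)):ℤ):ℝ)) δ hδ hδ' m ?_ ?_
      · intro i hi
        have hidx1 : q + 1 + ((i:ℕ)+1 : ℕ) = (q + 1 + (i:ℤ)) + 1 := by push_cast; ring
        have hn1 : a ≤ q + 1 + (i:ℤ) := by omega
        have hn2 : q + 1 + (i:ℤ) + 1 ≤ b := by omega
        have hs := hstep (q + 1 + (i:ℤ)) (by omega) (by omega)
        have hw := hwin (q + 1 + (i:ℤ) + 1) (by omega) (by omega)
        have hqq : ¬ (f' ((q + 1 + (i:ℤ) : ℤ):ℝ) ≤ (m:ℝ) + δ) := by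
          intro hcon
          have := (hq (q + 1 + (i:ℤ)) (by omega) (by omega)).mp hcon
          omega
        push_neg at hqq
        simp only [hidx1]
        push_cast at hs hw hqq ⊢
        constructor
        · linarith [hs.1, hqq]
        · linarith [hs.2, hw.2]
      · intro i hi
        have hidx1 : q + 1 + ((i:ℕ)+1 : ℕ) = (q + 1 + (i:ℤ)) + 1 := by push_cast; ring
        have hidx2 : q + 1 + ((i:ℕ)+2 : ℕ) = (q + 1 + (i:ℤ)) + 1 + 1 := by push_cast; ring
        have hs1 := hstep (q + 1 + (i:ℤ)) (by omega) (by omega)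
        have hs2 := hstep (q + 1 + (i:ℤ) + 1) (by omega) (by omega)
        simp only [hidx1, hidx2]
        push_cast at hs1 hs2 ⊢
        linarith [hs1.2, hs2.1]
    -- combine
    have htri : ‖SL + SM + SR‖ ≤ ‖SL‖ + ‖SM‖ + ‖SR‖ := by
      refine le_trans (norm_add_le _ _) ?_
      have := norm_add_le SL SM
      linarith
    refine le_trans htri ?_
    have hsq : Real.sqrt ρ * Real.sqrt ρ = ρ := Real.mul_self_sqrt hρ.le
    rcases le_or_gt (Real.sqrt ρ) (1/2) with hc | hc
    · have hδeq : δ = Real.sqrt ρ := min_eq_left hc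
      have hL' : ‖SL‖ ≤ 1 + 1/δ := by
        rcases le_or_gt a p with h | h
        · exact hLb h
        · rw [hSL, Finset.Icc_eq_empty (by omega)]
          simp only [Finset.sum_empty, norm_zero]
          positivity
      have hR' : ‖SR‖ ≤ 1 + 1/δ := by
        rcases le_or_gt (q+1) b with h | h
        · exact hRb h
        · rw [hSR, Finset.Icc_eq_empty (by omega)]
          simp only [Finset.sum_empty, norm_zero]
          positivity
      have hkey : 2*δ/ρ + 2/δ = 4/Real.sqrt ρ := by
        have h2s : 2 * Real.sqrt ρ / ρ = 2 / Real.sqrt ρ := by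
          rw [div_eq_div_iff hρ.ne' hsρ.ne']; linear_combination 2 * hsq
        rw [hδeq, h2s]; ring
      have h2 : 2/δ = 1/δ + 1/δ := by ring
      rw [hBdef]
      have : ‖SL‖ + ‖SM‖ + ‖SR‖ ≤ (2*δ/ρ + 2/δ) + 3 := by
        rw [h2]; linarith
      rw [hkey] at this
      linarith
    · have hδeq : δ = 1/2 := min_eq_right hc.le
      have hpa : p = a - 1 := by
        by_contra hcon
        have hap : a ≤ p := by omega
        have h1 := (hp p hap hp2).mpr le_rfl
        have h2 := (hwin p hap hp2).1
        rw [hδeq] at h1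
        linarith
      have hqb : q = b := by
        have h1 : f' ((b:ℤ):ℝ) ≤ (m:ℝ) + δ := by
          have := (hwin b hab le_rfl).2
          rw [hδeq]
          linarith
        have := (hq b hab le_rfl).mp h1
        omega
      have hL0 : SL = 0 := by
        rw [hSL, Finset.Icc_eq_empty (by omega), Finset.sum_empty]
      have hR0 : SR = 0 := by
        rw [hSR, Finset.Icc_eq_empty (by omega), Finset.sum_empty]
      rw [hL0, hR0]
      simp only [norm_zero]
      have hρ4 : 1/2 < Real.sqrt ρ := hc
      have h1ρ : 1/ρ ≤ 2/Real.sqrt ρ := by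
        rw [div_le_div_iff₀ hρ hsρ]
        nlinarith [hsq, hρ4]
      have hmid' : ‖SM‖ ≤ 1/ρ + 1 := by
        rw [hδeq] at hmid
        have : 2*(1/2)/ρ = 1/ρ := by ring
        rw [this] at hmid
        exact hmid
      rw [hBdef]
      have h4 : 2/Real.sqrt ρ ≤ 4/Real.sqrt ρ := by
        rw [div_le_div_iff₀ hsρ hsρ]
        nlinarith
      linarith
  calc ∑ m ∈ Finset.Icc (round (f' (k:ℝ))) (round (f' (l:ℝ))),
        ‖∑ n ∈ (Finset.Icc k l).filter (fun n : ℤ => round (f' (n:ℝ)) = m),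
          Complex.exp (2 * Real.pi * Complex.I * (f (n:ℝ)))‖
      ≤ (Finset.Icc (round (f' (k:ℝ))) (round (f' (l:ℝ)))).card • B :=
        Finset.sum_le_card_nsmul _ _ _ hfiber
    _ ≤ (|f' l - f' k| + 2) * B := by
        rw [nsmul_eq_mul]
        have hcard : (Finset.Icc (round (f' (k:ℝ))) (round (f' (l:ℝ)))).card
            = (round (f' (l:ℝ)) + 1 - round (f' (k:ℝ))).toNat := Int.card_Icc _ _
        have hmkl : f' (k:ℝ) ≤ f' (l:ℝ) :=
          hmono _ (hmem k le_rfl hkl.le) _ (hmem l hkl.le le_rfl) hkl'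
        have habs : |f' (l:ℝ) - f' (k:ℝ)| = f' (l:ℝ) - f' (k:ℝ) := abs_of_nonneg (by linarith)
        have hrk := round_mem (f' (k:ℝ))
        have hrl := round_mem (f' (l:ℝ))
        have hrmono : round (f' (k:ℝ)) ≤ round (f' (l:ℝ)) := round_mono' hmkl
        have hcast : ((round (f' (l:ℝ)) + 1 - round (f' (k:ℝ))).toNat : ℝ)
            = (round (f' (l:ℝ)) : ℝ) + 1 - (round (f' (k:ℝ)) : ℝ) := by
          have h0 : (0:ℤ) ≤ round (f' (l:ℝ)) + 1 - round (f' (k:ℝ)) := by omega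
          exact_mod_cast congrArg (fun z : ℤ => (z : ℝ)) (Int.toNat_of_nonneg h0)
        rw [hcard]
        apply mul_le_mul_of_nonneg_right _ hBpos
        rw [hcast, habs]
        linarith [hrk.1, hrk.2, hrl.1, hrl.2]

/-- Van der Corput's estimate on oscillatory exponential sums (Lemma 5.5 of the paper). -/
theorem stmt_10 (k l : ℤ) (hkl : k < l) (ρ : ℝ) (hρ : 0 < ρ)
    (f f' f'' : ℝ → ℝ)
    (hf' : ∀ x ∈ Set.Icc (k : ℝ) (l : ℝ), HasDerivWithinAt f (f' x) (Set.Icc (k : ℝ) (l : ℝ)) x)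
    (hf'' : ∀ x ∈ Set.Icc (k : ℝ) (l : ℝ), HasDerivWithinAt f' (f'' x) (Set.Icc (k : ℝ) (l : ℝ)) x)
    (hρbound : (∀ x ∈ Set.Icc (k : ℝ) (l : ℝ), ρ ≤ f'' x) ∨
               (∀ x ∈ Set.Icc (k : ℝ) (l : ℝ), f'' x ≤ -ρ)) :
    ‖∑ n ∈ Finset.Icc k l, Complex.exp (2 * Real.pi * Complex.I * (f n))‖ ≤
      (|f' l - f' k| + 2) * (4 / Real.sqrt ρ + 3) := by
  rcases hρbound with hge | hle
  · exact main_incr k l hkl ρ hρ f f' f'' hf' hf'' hge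
  · have h := main_incr k l hkl ρ hρ (fun x => -f x) (fun x => -f' x) (fun x => -f'' x)
      (fun x hx => (hf' x hx).neg) (fun x hx => (hf'' x hx).neg)
      (fun x hx => by have := hle x hx; linarith)
    have he : ∀ n ∈ Finset.Icc k l, Complex.exp (2 * Real.pi * Complex.I * ((↑(-f (n:ℝ)) : ℂ)))
        = starRingEnd ℂ (Complex.exp (2 * Real.pi * Complex.I * ((↑(f (n:ℝ)) : ℂ)))) := by
      intro n _
      rw [← Complex.exp_conj]
      congr 1
      simp only [map_mul, Complex.conj_I, Complex.conj_ofReal, map_ofNat]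
      push_cast
      ring
    rw [Finset.sum_congr rfl he, ← map_sum, Complex.norm_conj] at h
    have habs : |-f' ((l:ℤ):ℝ) - -f' ((k:ℤ):ℝ)| = |f' ((l:ℤ):ℝ) - f' ((k:ℤ):ℝ)| := by
      rw [show -f' ((l:ℤ):ℝ) - -f' ((k:ℤ):ℝ) = -(f' ((l:ℤ):ℝ) - f' ((k:ℤ):ℝ)) by ring, abs_neg]
    rw [habs] at h
    exact h
end

section
/- Let B be a finite set of irrational real numbers, let K be a finite set of positive integers, and let (e_m)_{m∈ℕ} be a sequence of positive real numbers with e_m → 0. Then the set S = {m ∈ ℕ : ‖m^k·α‖ ≤ e_m for some α ∈ B and some k ∈ K} has density 0, i.e., |S ∩ {1,…,N}|/N → 0 as N → ∞. -/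
open Filter Finset

/-- The distance of a real number to the nearest integer. -/
noncomputable def distToInt (x : ℝ) : ℝ := |x - round x|


lemma distToInt_pos {x : ℝ} (hx : Irrational x) : 0 < distToInt x := by
  rw [distToInt, abs_pos, sub_ne_zero]
  exact fun h => (hx ⟨round x, by exact_mod_cast h.symm⟩)

lemma distToInt_le_int (x : ℝ) (n : ℤ) : distToInt x ≤ |x - n| := by
  have h1 : |x - round x| ≤ 1/2 := abs_sub_round x
  have h1' : -(1/2) ≤ x - round x ∧ x - round x ≤ 1/2 := abs_le.mp h1
  rw [distToInt]
  rcases lt_trichotomy n (round x) with h | h | h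
  · have hn : (n:ℝ) ≤ round x - 1 := by exact_mod_cast Int.le_sub_one_of_lt h
    have : (1:ℝ)/2 ≤ |x - n| := le_trans (by linarith [h1'.1]) (le_abs_self _)
    linarith
  · rw [h]
  · have hn : (round x : ℝ) + 1 ≤ n := by exact_mod_cast h
    have : (1:ℝ)/2 ≤ |x - n| := le_trans (by linarith [h1'.2]) (neg_le_abs _)
    linarith

lemma distToInt_sub_le (x y : ℝ) : distToInt (x - y) ≤ distToInt x + distToInt y := by
  have h := distToInt_le_int (x - y) (round x - round y)
  refine h.trans ?_
  push_cast
  calc |x - y - ((round x : ℝ) - round y)| = |(x - round x) - (y - round y)| := by ring_nf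
    _ ≤ |x - round x| + |y - round y| := abs_sub _ _


lemma poly_shift (k d : ℕ) (c : ℕ → ℝ) (m : ℕ) :
    (∑ i ∈ range (k+2), c i * ((m:ℝ)+(d:ℝ))^i) - ∑ i ∈ range (k+2), c i * (m:ℝ)^i
    = ∑ j ∈ range (k+1),
        (∑ i ∈ range (k+2), if j < i then c i * (i.choose j) * (d:ℝ)^(i-j) else 0) * (m:ℝ)^j := by
  have expand : ∀ i ∈ range (k+2), c i * ((m:ℝ)+(d:ℝ))^i
      = ∑ j ∈ range (k+2), (if j ≤ i then c i * (i.choose j) * (d:ℝ)^(i-j) else 0) * (m:ℝ)^j := by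
    intro i hi
    rw [Finset.mem_range] at hi
    rw [add_pow, Finset.mul_sum]
    have h1 : range (i+1) = (range (k+2)).filter (· ≤ i) := by
      ext x; simp [Nat.lt_succ_iff]; omega
    rw [h1, Finset.sum_filter]
    apply Finset.sum_congr rfl
    intro j hj
    by_cases h : j ≤ i <;> simp [h] <;> ring
  rw [Finset.sum_congr rfl expand, Finset.sum_comm, ← Finset.sum_sub_distrib]
  have step : ∀ j ∈ range (k+2),
      (∑ i ∈ range (k+2), (if j ≤ i then c i * (i.choose j) * (d:ℝ)^(i-j) else 0) * (m:ℝ)^j)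
        - c j * (m:ℝ)^j
      = (∑ i ∈ range (k+2), if j < i then c i * (i.choose j) * (d:ℝ)^(i-j) else 0) * (m:ℝ)^j := by
    intro j hj
    rw [← Finset.sum_mul, ← sub_mul]
    congr 1
    have split : ∀ i, (if j ≤ i then c i * (i.choose j) * (d:ℝ)^(i-j) else 0)
        = (if j < i then c i * (i.choose j) * (d:ℝ)^(i-j) else 0)
          + (if i = j then c i * (i.choose j) * (d:ℝ)^(i-j) else 0) := by
      intro i
      rcases lt_trichotomy j i with h | h | h
      · simp [h.le, h, h.ne']
      · subst h; simp
      · simp [show ¬ j ≤ i by omega, show ¬ j < i by omega, show i ≠ j by omega]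
    rw [Finset.sum_congr rfl (fun i _ => split i), Finset.sum_add_distrib,
      Finset.sum_ite_eq' (range (k+2)) j]
    simp [hj]
  rw [Finset.sum_congr rfl step, Finset.sum_range_succ]
  have hz : (∑ i ∈ range (k+2), if k+1 < i then c i * (i.choose (k+1)) * (d:ℝ)^(i-(k+1)) else 0) = 0 := by
    apply Finset.sum_eq_zero
    intro i hi
    rw [Finset.mem_range] at hi
    rw [if_neg (by omega)]
  rw [hz, zero_mul, add_zero]

set_option maxHeartbeats 1000000 in
theorem key (k : ℕ) : ∀ (c : ℕ → ℝ), Irrational (c k) → ∀ δ : ℝ, 0 < δ →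
    ∃ ε : ℝ, 0 < ε ∧ ∃ N₀ : ℕ, ∀ N, N₀ ≤ N →
      (((Finset.Icc 1 N).filter
          (fun m : ℕ => distToInt (∑ i ∈ range (k+1), c i * (m:ℝ)^i) ≤ ε)).card : ℝ) ≤ δ * N := by
  induction k with
  | zero =>
    intro c hc δ hδ
    refine ⟨distToInt (c 0) / 2, by linarith [distToInt_pos hc], 0, fun N _ => ?_⟩
    have : (Finset.Icc 1 N).filter
        (fun m : ℕ => distToInt (∑ i ∈ range 1, c i * (m:ℝ)^i) ≤ distToInt (c 0) / 2) = ∅ := by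
      apply Finset.filter_false_of_mem
      intro m _
      simp only [Finset.range_one, Finset.sum_singleton, pow_zero, mul_one]
      linarith [distToInt_pos hc]
    rw [this]
    simp
    positivity
  | succ k IH =>
    intro c hc δ hδ
    set H : ℕ := ⌈(4:ℝ)/δ⌉₊ + 2 with hHdef
    have hH2 : 2 ≤ H := by omega
    have hHpos : (0:ℝ) < H := by positivity
    have hHge : 4/δ ≤ (H:ℝ) := by
      calc (4:ℝ)/δ ≤ ⌈(4:ℝ)/δ⌉₊ := Nat.le_ceil _
        _ ≤ H := by exact_mod_cast Nat.le_add_right _ 2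
    set δ' : ℝ := δ / (4 * (H:ℝ)^2) with hδ'def
    have hδ'pos : 0 < δ' := by positivity
    set cd : ℕ → ℕ → ℝ :=
      fun d j => ∑ i ∈ range (k+2), if j < i then c i * (i.choose j) * (d:ℝ)^(i-j) else 0
      with hcddef
    have hcdIrr : ∀ d : ℕ, 1 ≤ d → Irrational (cd d k) := by
      intro d hd
      have heq : cd d k = c (k+1) * ((k+1) * d : ℕ) := by
        simp only [hcddef]
        have h1 : ∀ i ∈ range (k+2),
            (if k < i then c i * (i.choose k) * (d:ℝ)^(i-k) else 0)
            = (if i = k+1 then c i * (i.choose k) * (d:ℝ)^(i-k) else 0) := by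
          intro i hi
          rw [Finset.mem_range] at hi
          rcases eq_or_ne i (k+1) with h | h
          · simp [h]
          · rw [if_neg (by omega), if_neg h]
        rw [Finset.sum_congr rfl h1, Finset.sum_ite_eq' (range (k+2)) (k+1)]
        rw [if_pos (Finset.mem_range.mpr (by omega))]
        rw [Nat.choose_succ_self_right]
        push_cast
        have : k + 1 - k = 1 := by omega
        rw [this, pow_one]
        ring
      rw [heq]
      exact hc.mul_natCast (by positivity)
    have hIH : ∀ d : ℕ, ∃ ε, 0 < ε ∧ ∃ N₀ : ℕ, ∀ N, N₀ ≤ N → 1 ≤ d →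
        (((Finset.Icc 1 N).filter
          (fun m : ℕ => distToInt (∑ j ∈ range (k+1), cd d j * (m:ℝ)^j) ≤ ε)).card : ℝ) ≤ δ' * N := by
      intro d
      by_cases hd : 1 ≤ d
      · obtain ⟨ε, hε, N₀, h⟩ := IH (cd d) (hcdIrr d hd) δ' hδ'pos
        exact ⟨ε, hε, N₀, fun N hN _ => h N hN⟩
      · exact ⟨1, one_pos, 0, fun N _ hd' => absurd hd' hd⟩
    choose ε' hε'pos hIH2 using hIH
    choose N' hN' using hIH2
    set D : Finset ℕ := Finset.Icc 1 (H-1) with hDdef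
    have hDne : D.Nonempty := ⟨1, by simp only [hDdef, Finset.mem_Icc]; omega⟩
    set ε : ℝ := (D.inf' hDne ε') / 2 with hεdef
    have hεpos : 0 < ε := by
      rw [hεdef]
      have : 0 < D.inf' hDne ε' := (Finset.lt_inf'_iff hDne).mpr (fun d _ => hε'pos d)
      linarith
    refine ⟨ε, hεpos, ?_⟩
    refine ⟨max (D.sup N') ⌈4*(H:ℝ)/δ⌉₊, ?_⟩
    intro N hN
    set A : Finset ℕ := (Finset.Icc 1 N).filter
        (fun m : ℕ => distToInt (∑ i ∈ range (k+1+1), c i * (m:ℝ)^i) ≤ ε) with hAdef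
    show (A.card : ℝ) ≤ δ * N
    set Bd : ℕ → Finset ℕ := fun d => (Finset.Icc 1 N).filter
        (fun m : ℕ => distToInt (∑ j ∈ range (k+1), cd d j * (m:ℝ)^j) ≤ ε' d) with hBdef
    set U : Finset ℕ := D.biUnion Bd with hUdef
    set I : Finset ℕ := A.image (· / H) with hIdef
    set F : ℕ → Finset ℕ := fun i => A.filter (fun m => m / H = i) with hFdef
    have hfib : A.card = ∑ i ∈ I, (F i).card :=
      Finset.card_eq_sum_card_fiberwise (fun m hm => Finset.mem_image_of_mem _ hm)
    set I₂ : Finset ℕ := I.filter (fun i => 2 ≤ (F i).card) with hI₂def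
    set I₁ : Finset ℕ := I.filter (fun i => ¬ 2 ≤ (F i).card) with hI₁def
    have hfibH : ∀ i, (F i).card ≤ H := by
      intro i
      have hsub : F i ⊆ Finset.Ico (H*i) (H*i+H) := by
        intro m hm
        have hmi : m / H = i := (Finset.mem_filter.mp hm).2
        have h1 := Nat.div_add_mod m H
        rw [hmi] at h1
        have h2 := Nat.mod_lt m (show 0 < H by omega)
        rw [Finset.mem_Ico]; omega
      calc (F i).card ≤ _ := Finset.card_le_card hsub
        _ = H := by rw [Nat.card_Ico]; omega
    have hIcard : I.card ≤ N / H + 1 := by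
      have hsub : I ⊆ Finset.range (N / H + 1) := by
        intro i hi
        obtain ⟨m, hm, rfl⟩ := Finset.mem_image.mp hi
        have hmN : m ≤ N := (Finset.mem_Icc.mp (Finset.mem_filter.mp hm).1).2
        rw [Finset.mem_range]
        exact Nat.lt_succ_of_le (Nat.div_le_div_right hmN)
      simpa using Finset.card_le_card hsub
    have hkey : ∀ i ∈ I₂, ∃ m ∈ U, m / H = i := by
      intro i hi
      obtain ⟨hiI, hi2⟩ := Finset.mem_filter.mp hi
      obtain ⟨a, ha, b, hb, hab⟩ := Finset.one_lt_card.mp (by omega : 1 < (F i).card)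
      have main : ∀ a b : ℕ, a ∈ F i → b ∈ F i → a < b → ∃ m ∈ U, m / H = i := by
        intro a b ha hb hlt
        have haA : a ∈ A := (Finset.mem_filter.mp ha).1
        have hbA : b ∈ A := (Finset.mem_filter.mp hb).1
        have hai : a / H = i := (Finset.mem_filter.mp ha).2
        have hbi : b / H = i := (Finset.mem_filter.mp hb).2
        refine ⟨a, ?_, hai⟩
        set d := b - a with hddef
        have hd1 : 1 ≤ d := by omega
        have hdH : d ≤ H - 1 := by
          have h1 := Nat.div_add_mod a H
          have h2 := Nat.div_add_mod b H
          rw [hai] at h1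
          rw [hbi] at h2
          have h3 := Nat.mod_lt a (show 0 < H by omega)
          have h4 := Nat.mod_lt b (show 0 < H by omega)
          omega
        have hdD : d ∈ D := by rw [hDdef, Finset.mem_Icc]; exact ⟨hd1, hdH⟩
        rw [hUdef]
        refine Finset.mem_biUnion.mpr ⟨d, hdD, ?_⟩
        refine Finset.mem_filter.mpr ⟨(Finset.mem_filter.mp haA).1, ?_⟩
        have hba : (b:ℝ) = (a:ℝ) + (d:ℝ) := by
          have : b = a + d := by omega
          rw [this]; push_cast; ring
        have e1 : distToInt ((∑ i ∈ range (k+2), c i * (b:ℝ)^i)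
            - ∑ i ∈ range (k+2), c i * (a:ℝ)^i) ≤ ε + ε := by
          refine (distToInt_sub_le _ _).trans (add_le_add ?_ ?_)
          · exact (Finset.mem_filter.mp hbA).2
          · exact (Finset.mem_filter.mp haA).2
        have e2 : (∑ j ∈ range (k+1), cd d j * (a:ℝ)^j)
            = (∑ i ∈ range (k+2), c i * (b:ℝ)^i) - ∑ i ∈ range (k+2), c i * (a:ℝ)^i := by
          simp only [hcddef]
          rw [hba]
          exact (poly_shift k d c a).symm
        calc distToInt (∑ j ∈ range (k+1), cd d j * (a:ℝ)^j)
            = distToInt ((∑ i ∈ range (k+2), c i * (b:ℝ)^i)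
                - ∑ i ∈ range (k+2), c i * (a:ℝ)^i) := by rw [e2]
          _ ≤ ε + ε := e1
          _ = D.inf' hDne ε' := by rw [hεdef]; ring
          _ ≤ ε' d := Finset.inf'_le ε' hdD
      rcases Ne.lt_or_gt hab with h | h
      · exact main a b ha hb h
      · exact main b a hb ha h
    choose! f hfU hf using hkey
    have hI₂card : I₂.card ≤ U.card := by
      apply Finset.card_le_card_of_injOn f (fun i hi => hfU i hi)
      intro i hi j hj hij
      rw [← hf i hi, ← hf j hj, hij]
    have hUcard : (U.card : ℝ) ≤ (H:ℝ) * (δ' * N) := by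
      have hDcard : (D.card : ℝ) ≤ (H : ℝ) := by
        rw [hDdef]
        rw [Nat.card_Icc]
        exact_mod_cast (by omega : H - 1 + 1 - 1 ≤ H)
      calc (U.card : ℝ) ≤ ((∑ d ∈ D, (Bd d).card : ℕ) : ℝ) := by
            exact_mod_cast Finset.card_biUnion_le
        _ = ∑ d ∈ D, ((Bd d).card : ℝ) := by push_cast; rfl
        _ ≤ ∑ d ∈ D, δ' * N := by
            refine Finset.sum_le_sum (fun d hd => ?_)
            have hd1 : 1 ≤ d := (Finset.mem_Icc.mp hd).1
            have hNd : N' d ≤ N :=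
              le_trans (le_trans (Finset.le_sup hd) (le_max_left _ _)) hN
            exact hN' d N hNd hd1
        _ = D.card * (δ' * N) := by rw [Finset.sum_const, nsmul_eq_mul]
        _ ≤ H * (δ' * N) := by
            apply mul_le_mul_of_nonneg_right hDcard
            positivity
    have hsplit : A.card ≤ I₁.card + I₂.card * H := by
      rw [hfib]
      have hsum : ∑ i ∈ I, (F i).card = (∑ i ∈ I₂, (F i).card) + ∑ i ∈ I₁, (F i).card := by
        rw [hI₂def, hI₁def]
        exact (Finset.sum_filter_add_sum_filter_not I _ _).symm
      rw [hsum]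
      have b1 : ∑ i ∈ I₂, (F i).card ≤ I₂.card * H := by
        calc ∑ i ∈ I₂, (F i).card ≤ ∑ i ∈ I₂, H := Finset.sum_le_sum (fun i _ => hfibH i)
          _ = I₂.card * H := by rw [Finset.sum_const, smul_eq_mul]
      have b2 : ∑ i ∈ I₁, (F i).card ≤ I₁.card := by
        calc ∑ i ∈ I₁, (F i).card ≤ ∑ i ∈ I₁, 1 := by
              refine Finset.sum_le_sum (fun i hi => ?_)
              have := (Finset.mem_filter.mp hi).2
              omega
          _ = I₁.card := by rw [Finset.sum_const, smul_eq_mul, mul_one]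
      omega
    have h1 : (A.card : ℝ) ≤ (I₁.card : ℝ) + (I₂.card : ℝ) * H := by exact_mod_cast hsplit
    have hI₁R : (I₁.card : ℝ) ≤ ((N / H : ℕ) : ℝ) + 1 := by
      have : I₁.card ≤ N / H + 1 := le_trans (Finset.card_le_card (Finset.filter_subset _ _)) hIcard
      exact_mod_cast this
    have hNH : ((N / H : ℕ) : ℝ) ≤ (N : ℝ) / H := Nat.cast_div_le
    have h4δH : (4:ℝ) ≤ δ * H := by
      rw [div_le_iff₀ hδ] at hHge
      linarith
    have hd4 : (N:ℝ)/H ≤ δ * N / 4 := by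
      rw [div_le_div_iff₀ hHpos (by norm_num : (0:ℝ) < 4)]
      have := mul_le_mul_of_nonneg_left h4δH (Nat.cast_nonneg (α := ℝ) N)
      linarith
    have hone : (1:ℝ) ≤ δ * N / 4 := by
      have hNge : (4*(H:ℝ)/δ) ≤ N := by
        refine le_trans (Nat.le_ceil _) ?_
        exact_mod_cast le_trans (le_max_right _ _) hN
      have hH1 : (1:ℝ) ≤ H := by exact_mod_cast (by omega : 1 ≤ H)
      have h4N : (4:ℝ) ≤ δ * N := by
        rw [div_le_iff₀ hδ] at hNge
        linarith
      linarith
    have hI₂R : (I₂.card : ℝ) * H ≤ δ * N / 4 := by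
      have hc : (I₂.card : ℝ) ≤ U.card := by exact_mod_cast hI₂card
      have hUc : (U.card:ℝ) * H ≤ (H * (δ' * N)) * H :=
        mul_le_mul_of_nonneg_right hUcard (le_of_lt hHpos)
      have hgen : ∀ x : ℝ, x ≠ 0 → x * (δ / (4 * x^2) * N) * x = δ * N / 4 := by
        intro x hx
        field_simp
      have heq : (H * (δ' * N)) * (H:ℝ) = δ * N / 4 := by
        rw [hδ'def]
        exact hgen H (ne_of_gt hHpos)
      calc (I₂.card : ℝ) * H ≤ (U.card : ℝ) * H :=
            mul_le_mul_of_nonneg_right hc hHpos.le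
        _ ≤ (H * (δ' * N)) * H := hUc
        _ = δ * N / 4 := heq
    linarith

/-- Lemma 4.4 of the paper. -/
theorem stmt_11 (B : Finset ℝ) (hB : ∀ α ∈ B, Irrational α)
    (K : Finset ℕ) (hK : ∀ k ∈ K, 1 ≤ k)
    (e : ℕ → ℝ) (he : ∀ m, 0 < e m) (he0 : Tendsto e atTop (nhds 0)) :
    Tendsto
      (fun N : ℕ =>
        (Nat.card ↥({m : ℕ | ∃ α ∈ B, ∃ k ∈ K, distToInt ((m : ℝ) ^ k * α) ≤ e m}
            ∩ Set.Icc 1 N) : ℝ) / N)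
      atTop (nhds 0) := by
  classical
  have hcard : ∀ N : ℕ, (Nat.card ↥({m : ℕ | ∃ α ∈ B, ∃ k ∈ K, distToInt ((m : ℝ) ^ k * α) ≤ e m}
      ∩ Set.Icc 1 N) : ℝ)
      = (((Finset.Icc 1 N).filter
          (fun m : ℕ => ∃ α ∈ B, ∃ k ∈ K, distToInt ((m : ℝ) ^ k * α) ≤ e m)).card : ℝ) := by
    intro N
    congr 1
    have hset : {m : ℕ | ∃ α ∈ B, ∃ k ∈ K, distToInt ((m : ℝ) ^ k * α) ≤ e m} ∩ Set.Icc 1 N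
        = ↑((Finset.Icc 1 N).filter
            (fun m : ℕ => ∃ α ∈ B, ∃ k ∈ K, distToInt ((m : ℝ) ^ k * α) ≤ e m)) := by
      ext m
      simp [Set.mem_Icc, Finset.mem_Icc, and_comm]
    rw [hset, Nat.card_coe_set_eq, Set.ncard_coe_finset]
  simp only [hcard]
  rw [Metric.tendsto_atTop]
  intro δ hδ
  rcases Finset.eq_empty_or_nonempty (B ×ˢ K) with hBK | hBK
  · refine ⟨0, fun N _ => ?_⟩
    have : ((Finset.Icc 1 N).filter
        (fun m : ℕ => ∃ α ∈ B, ∃ k ∈ K, distToInt ((m : ℝ) ^ k * α) ≤ e m)) = ∅ := by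
      apply Finset.filter_false_of_mem
      rintro m _ ⟨α, hα, k, hk, -⟩
      have hmem : (α, k) ∈ B ×ˢ K := Finset.mem_product.mpr ⟨hα, hk⟩
      rw [hBK] at hmem
      exact absurd hmem (Finset.notMem_empty _)
    rw [this]
    simpa using hδ
  -- nonempty case
  set P : ℕ := B.card * K.card + 1 with hPdef
  have hPpos : (0:ℝ) < P := by positivity
  set δ'' : ℝ := δ / (2 * P) with hδ''def
  have hδ''pos : 0 < δ'' := by positivity
  have hpair : ∀ q : ℝ × ℕ, ∃ ε, 0 < ε ∧ ∃ N₀ : ℕ, ∀ N, N₀ ≤ N → q.1 ∈ B → q.2 ∈ K →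
      (((Finset.Icc 1 N).filter
        (fun m : ℕ => distToInt ((m:ℝ) ^ q.2 * q.1) ≤ ε)).card : ℝ) ≤ δ'' * N := by
    rintro ⟨α, k⟩
    by_cases hq : α ∈ B ∧ k ∈ K
    · obtain ⟨ε, hε, N₀, h⟩ := key k (fun i => if i = k then α else 0)
        (by simpa using hB α hq.1) δ'' hδ''pos
      refine ⟨ε, hε, N₀, fun N hN _ _ => ?_⟩
      have hsum : ∀ m : ℕ,
          (∑ i ∈ range (k+1), (if i = k then α else 0) * (m:ℝ)^i) = (m:ℝ)^k * α := by
        intro m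
        have hite : ∀ i ∈ range (k+1), (if i = k then α else 0) * (m:ℝ)^i
            = (if i = k then α * (m:ℝ)^i else 0) := by
          intro i _
          split <;> simp
        rw [Finset.sum_congr rfl hite, Finset.sum_ite_eq' (range (k+1)) k]
        rw [if_pos (Finset.mem_range.mpr (by omega))]
        ring
      have := h N hN
      simp only [hsum] at this
      exact this
    · exact ⟨1, one_pos, 0, fun N _ h1 h2 => absurd ⟨h1, h2⟩ hq⟩
  choose εf hεfpos hpair2 using hpair
  choose Nf hNf using hpair2
  set ε : ℝ := (B ×ˢ K).inf' hBK εf with hεdef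
  have hεpos : 0 < ε := (Finset.lt_inf'_iff hBK).mpr (fun q _ => hεfpos q)
  -- M₂ from he0
  obtain ⟨M₂, hM₂⟩ := (Metric.tendsto_atTop.mp he0) ε hεpos
  have hM₂' : ∀ m, M₂ ≤ m → e m ≤ ε := by
    intro m hm
    have := hM₂ m hm
    rw [Real.dist_eq, sub_zero] at this
    exact le_of_lt (lt_of_le_of_lt (le_abs_self _) this)
  set N₀ : ℕ := max ((B ×ˢ K).sup Nf) (⌈(2*(M₂:ℝ)+2)/δ⌉₊ + 1) with hN₀def
  refine ⟨N₀, fun N hN => ?_⟩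
  have hN1 : 1 ≤ N := le_trans (by omega) hN
  -- subset bound
  have hsub : ((Finset.Icc 1 N).filter
      (fun m : ℕ => ∃ α ∈ B, ∃ k ∈ K, distToInt ((m : ℝ) ^ k * α) ≤ e m))
      ⊆ (Finset.Icc 1 M₂) ∪ (B ×ˢ K).biUnion (fun q => (Finset.Icc 1 N).filter
          (fun m : ℕ => distToInt ((m:ℝ) ^ q.2 * q.1) ≤ εf q)) := by
    intro m hm
    obtain ⟨hmIcc, α, hα, k, hk, hle⟩ := Finset.mem_filter.mp hm
    rw [Finset.mem_Icc] at hmIcc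
    rcases le_or_gt m M₂ with h | h
    · exact Finset.mem_union_left _ (Finset.mem_Icc.mpr ⟨hmIcc.1, h⟩)
    · refine Finset.mem_union_right _ (Finset.mem_biUnion.mpr
        ⟨(α, k), Finset.mem_product.mpr ⟨hα, hk⟩, ?_⟩)
      refine Finset.mem_filter.mpr ⟨Finset.mem_Icc.mpr hmIcc, ?_⟩
      refine le_trans hle (le_trans (hM₂' m h.le) ?_)
      exact Finset.inf'_le εf (Finset.mem_product.mpr ⟨hα, hk⟩)
  have hcount : (((Finset.Icc 1 N).filter
      (fun m : ℕ => ∃ α ∈ B, ∃ k ∈ K, distToInt ((m : ℝ) ^ k * α) ≤ e m)).card : ℝ)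
      ≤ M₂ + P * (δ'' * N) := by
    have step1 := Finset.card_le_card hsub
    have step2 := Finset.card_union_le (Finset.Icc 1 M₂)
      ((B ×ˢ K).biUnion (fun q => (Finset.Icc 1 N).filter
          (fun m : ℕ => distToInt ((m:ℝ) ^ q.2 * q.1) ≤ εf q)))
    have step3 := Finset.card_biUnion_le (s := B ×ˢ K)
      (t := fun q => (Finset.Icc 1 N).filter
          (fun m : ℕ => distToInt ((m:ℝ) ^ q.2 * q.1) ≤ εf q))
    have step4 : ((∑ q ∈ B ×ˢ K, ((Finset.Icc 1 N).filter
        (fun m : ℕ => distToInt ((m:ℝ) ^ q.2 * q.1) ≤ εf q)).card : ℕ) : ℝ)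
        ≤ P * (δ'' * N) := by
      rw [Nat.cast_sum]
      calc (∑ q ∈ B ×ˢ K, (((Finset.Icc 1 N).filter
          (fun m : ℕ => distToInt ((m:ℝ) ^ q.2 * q.1) ≤ εf q)).card : ℝ))
          ≤ ∑ q ∈ B ×ˢ K, δ'' * N := by
            refine Finset.sum_le_sum (fun q hq => ?_)
            have hqB := (Finset.mem_product.mp hq).1
            have hqK := (Finset.mem_product.mp hq).2
            have hNfq : Nf q ≤ N :=
              le_trans (le_trans (Finset.le_sup hq) (le_max_left _ _)) hN
            exact hNf q N hNfq hqB hqK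
        _ = ((B ×ˢ K).card : ℝ) * (δ'' * N) := by rw [Finset.sum_const, nsmul_eq_mul]
        _ ≤ P * (δ'' * N) := by
            have hle : (B ×ˢ K).card ≤ P := by
              rw [hPdef, Finset.card_product]
              omega
            exact mul_le_mul_of_nonneg_right (by exact_mod_cast hle) (by positivity)
    have hIccM : ((Finset.Icc 1 M₂).card : ℝ) ≤ M₂ := by
      rw [Nat.card_Icc]
      exact_mod_cast (by omega : M₂ + 1 - 1 ≤ M₂)
    have cN : ((Finset.Icc 1 N).filter
        (fun m : ℕ => ∃ α ∈ B, ∃ k ∈ K, distToInt ((m : ℝ) ^ k * α) ≤ e m)).card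
        ≤ (Finset.Icc 1 M₂).card + ∑ q ∈ B ×ˢ K, ((Finset.Icc 1 N).filter
          (fun m : ℕ => distToInt ((m:ℝ) ^ q.2 * q.1) ≤ εf q)).card :=
      le_trans step1 (le_trans step2 (Nat.add_le_add_left step3 _))
    have cR : (((Finset.Icc 1 N).filter
        (fun m : ℕ => ∃ α ∈ B, ∃ k ∈ K, distToInt ((m : ℝ) ^ k * α) ≤ e m)).card : ℝ)
        ≤ ((Finset.Icc 1 M₂).card : ℝ) + ((∑ q ∈ B ×ˢ K, ((Finset.Icc 1 N).filter
          (fun m : ℕ => distToInt ((m:ℝ) ^ q.2 * q.1) ≤ εf q)).card : ℕ) : ℝ) := by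
      exact_mod_cast cN
    linarith [hIccM, step4, cR]
  -- final numeric
  rw [Real.dist_eq, sub_zero]
  have hNpos : (0:ℝ) < N := by exact_mod_cast hN1
  have habs : |(((Finset.Icc 1 N).filter
      (fun m : ℕ => ∃ α ∈ B, ∃ k ∈ K, distToInt ((m : ℝ) ^ k * α) ≤ e m)).card : ℝ) / N|
      = (((Finset.Icc 1 N).filter
      (fun m : ℕ => ∃ α ∈ B, ∃ k ∈ K, distToInt ((m : ℝ) ^ k * α) ≤ e m)).card : ℝ) / N := by
    apply abs_of_nonneg
    positivity
  rw [habs]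
  rw [div_lt_iff₀ hNpos]
  have hPδ : P * (δ'' * N) = δ / 2 * N := by
    rw [hδ''def]
    field_simp
  have hM₂N : (M₂ : ℝ) < δ / 2 * N := by
    have h1 : ((⌈(2*(M₂:ℝ)+2)/δ⌉₊ + 1 : ℕ) : ℝ) ≤ N := by
      exact_mod_cast le_trans (le_max_right _ _) hN
    have h2 : (2*(M₂:ℝ)+2)/δ ≤ ⌈(2*(M₂:ℝ)+2)/δ⌉₊ := Nat.le_ceil _
    have h3 : (2*(M₂:ℝ)+2)/δ + 1 ≤ N := by push_cast at h1 ⊢; linarith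
    have h4 : (2*(M₂:ℝ)+2)/δ ≤ N := by linarith
    rw [div_le_iff₀ hδ] at h4
    linarith
  linarith [hcount]
end

section
/- Let a : ℕ → ℝ satisfy a(n) → +∞ and a(n+1) − a(n) → 0 as n → ∞. Then the range of the sequence ([a(n)])_{n∈ℕ} is a cofinite subset of ℕ: there exists N₀ such that every integer N ≥ N₀ equals [a(n)] for some n ∈ ℕ. -/
open Filter

/-- The `k = 0` case of Lemma 5.1 (iii) of the paper: if `a(n) → ∞` and
`a(n+1) − a(n) → 0`, then the range of `⌊a(n)⌋` is a cofinite subset of `ℕ`. -/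
theorem stmt_13 (a : ℕ → ℝ)
    (ha : Tendsto a atTop atTop)
    (hdiff : Tendsto (fun n => a (n + 1) - a n) atTop (nhds 0)) :
    ∃ N₀ : ℕ, ∀ N : ℕ, N₀ ≤ N → ∃ n : ℕ, 1 ≤ n ∧ ⌊a n⌋ = (N : ℤ) := by
  have hsmall : ∀ᶠ n in atTop, |a (n + 1) - a n| < 1 := by
    have := hdiff.eventually (Metric.ball_mem_nhds (0 : ℝ) one_pos)
    filter_upwards [this] with n hn
    simpa [Real.dist_eq] using hn
  obtain ⟨M, hM⟩ := eventually_atTop.mp hsmall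
  refine ⟨⌈a M⌉.toNat + 1, fun N hN => ?_⟩
  have haM : a M < N := by
    have h1 : a M ≤ ⌈a M⌉ := Int.le_ceil _
    have h2 : (⌈a M⌉ : ℝ) ≤ (⌈a M⌉.toNat : ℝ) := by
      exact_mod_cast Int.self_le_toNat _
    have h3 : (⌈a M⌉.toNat : ℝ) + 1 ≤ (N : ℝ) := by exact_mod_cast hN
    linarith
  have hex : ∃ k, (N : ℝ) ≤ a (M + k) := by
    obtain ⟨m, hm⟩ := (tendsto_atTop.mp ha (N : ℝ)).exists_forall_of_atTop
    exact ⟨m, hm (M + m) (Nat.le_add_left _ _)⟩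
  classical
  let k := Nat.find hex
  have hk : (N : ℝ) ≤ a (M + k) := Nat.find_spec hex
  have hkpos : 0 < k := by
    rcases Nat.eq_zero_or_pos k with h | h
    · exfalso; have := hk; rw [h] at this; simp at this; linarith
    · exact h
  have hprev : a (M + (k - 1)) < N := by
    have := Nat.find_min hex (Nat.sub_lt hkpos one_pos)
    exact lt_of_not_ge this
  have hstep : |a (M + (k - 1) + 1) - a (M + (k - 1))| < 1 :=
    hM _ (Nat.le_add_right _ _)
  have hsucc : M + (k - 1) + 1 = M + k := by omega
  rw [hsucc] at hstep
  have hub : a (M + k) < N + 1 := by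
    have := abs_lt.mp hstep
    linarith [this.2]
  refine ⟨M + k, by omega, ?_⟩
  rw [Int.floor_eq_iff]
  constructor
  · exact_mod_cast hk
  · exact_mod_cast hub
end

section
/- Let r ≥ 1 and k > j ≥ 1 be integers, and let l_1, …, l_r and h_1, …, h_r be integers. If the polynomials P_k(X) = Σ_{i=1}^{r} l_i·(X + h_i)^k and P_j(X) = Σ_{i=1}^{r} l_i·(X + h_i)^j are both nonzero, then deg P_j < deg P_k. -/
open Polynomial Finset

/-- The degree comparison used in Lemma 6.6 of the paper. -/
theorem stmt_16 (r : ℕ) (hr : 1 ≤ r) (k j : ℕ) (hj : 1 ≤ j) (hjk : j < k)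
    (l h : Fin r → ℤ)
    (hPk : (∑ i, C (l i) * (X + C (h i)) ^ k : Polynomial ℤ) ≠ 0)
    (hPj : (∑ i, C (l i) * (X + C (h i)) ^ j : Polynomial ℤ) ≠ 0) :
    (∑ i, C (l i) * (X + C (h i)) ^ j : Polynomial ℤ).degree <
      (∑ i, C (l i) * (X + C (h i)) ^ k : Polynomial ℤ).degree := by
  set s : ℕ → ℤ := fun n => ∑ i, l i * h i ^ n with hs
  have coeff_eq : ∀ m t : ℕ, (∑ i, C (l i) * (X + C (h i)) ^ m : Polynomial ℤ).coeff t
      = (m.choose t : ℤ) * s (m - t) := by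
    intro m t
    rw [finset_sum_coeff, hs, Finset.mul_sum]
    apply Finset.sum_congr rfl
    intro i _
    rw [coeff_C_mul, coeff_X_add_C_pow]
    ring
  have hex : ∃ n, s n ≠ 0 := by
    by_contra hc
    push_neg at hc
    apply hPj
    ext t
    rw [coeff_eq j t, hc, mul_zero, coeff_zero]
  set d := Nat.find hex with hd
  have hsd : s d ≠ 0 := Nat.find_spec hex
  have hmin : ∀ n, n < d → s n = 0 := fun n hn => by
    by_contra hc; exact absurd (Nat.find_le hc) (not_le.mpr hn)
  have key : ∀ m : ℕ, d ≤ m →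
      (∑ i, C (l i) * (X + C (h i)) ^ m : Polynomial ℤ).degree = ((m - d : ℕ) : WithBot ℕ) := by
    intro m hdm
    apply le_antisymm
    · rw [degree_le_iff_coeff_zero]
      intro t ht
      rw [Nat.cast_lt] at ht
      rw [coeff_eq]
      rcases le_or_gt t m with h1 | h1
      · have : m - t < d := by omega
        rw [hmin _ this, mul_zero]
      · rw [Nat.choose_eq_zero_of_lt h1]
        simp
    · apply le_degree_of_ne_zero
      rw [coeff_eq]
      have : m - (m - d) = d := by omega
      rw [this]
      exact mul_ne_zero (Nat.cast_ne_zero.mpr (Nat.choose_pos (by omega)).ne') hsd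
  have hdj : d ≤ j := by
    by_contra hc
    push_neg at hc
    apply hPj
    ext t
    rw [coeff_eq, hmin (j - t) (by omega), mul_zero, coeff_zero]
  rw [key j hdj, key k (by omega), Nat.cast_lt]
  omega
end

section
/- Let k, r, m be positive integers, let q be a polynomial with integer coefficients of degree at most k−1, and set p(X) = m·X^k + q(X). Let l_1, …, l_r and h_1, …, h_r be integers and suppose that the polynomial P_k(X) = Σ_{i=1}^{r} l_i·(X + h_i)^k is nonzero. Then the polynomial Σ_{i=1}^{r} l_i·p(X + h_i) is nonzero, has the same degree as P_k, and its leading coefficient equals m times the leading coefficient of P_k. -/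
open Polynomial Finset

/-- Lemma 6.6 of the paper: the leading coefficient of `∑ i, lᵢ · p(X + hᵢ)`,
where `p(X) = m·X^k + q(X)` with `deg q ≤ k − 1`, equals `m` times the leading
coefficient of `∑ i, lᵢ · (X + hᵢ)^k`. -/
theorem stmt_17 (k r m : ℕ) (hk : 1 ≤ k) (hr : 1 ≤ r) (hm : 1 ≤ m)
    (q : Polynomial ℤ) (hq : q.degree ≤ (k - 1 : ℕ))
    (p : Polynomial ℤ) (hp : p = C (m : ℤ) * X ^ k + q)
    (l h : Fin r → ℤ)
    (hPk : (∑ i, C (l i) * (X + C (h i)) ^ k : Polynomial ℤ) ≠ 0) :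
    (∑ i, C (l i) * p.comp (X + C (h i)) : Polynomial ℤ) ≠ 0 ∧
    (∑ i, C (l i) * p.comp (X + C (h i)) : Polynomial ℤ).degree =
      (∑ i, C (l i) * (X + C (h i)) ^ k : Polynomial ℤ).degree ∧
    (∑ i, C (l i) * p.comp (X + C (h i)) : Polynomial ℤ).leadingCoeff =
      (m : ℤ) * (∑ i, C (l i) * (X + C (h i)) ^ k : Polynomial ℤ).leadingCoeff := by
  have hm0 : (m : ℤ) ≠ 0 := by positivity
  set S : Polynomial ℤ := ∑ i, C (l i) * (X + C (h i)) ^ k with hS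
  set E : Polynomial ℤ := ∑ i, C (l i) * q.comp (X + C (h i)) with hE
  -- decomposition
  have hdecomp : (∑ i, C (l i) * p.comp (X + C (h i)) : Polynomial ℤ) = C (m : ℤ) * S + E := by
    rw [hS, hE, Finset.mul_sum, ← Finset.sum_add_distrib]
    refine Finset.sum_congr rfl fun i _ => ?_
    rw [hp]
    simp only [add_comp, mul_comp, pow_comp, C_comp, X_comp]
    ring
  -- moments
  set μ : ℕ → ℤ := fun t => ∑ i, l i * h i ^ t with hμdef
  have hScoeff : ∀ j : ℕ, S.coeff j = (k.choose j : ℤ) * μ (k - j) := by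
    intro j
    rw [hS, finset_sum_coeff, hμdef, Finset.mul_sum]
    refine Finset.sum_congr rfl fun i _ => ?_
    rw [coeff_C_mul, coeff_X_add_C_pow]
    ring
  set d : ℕ := S.natDegree with hd
  have hSdeg : S.degree = (d : ℕ) := degree_eq_natDegree hPk
  have hμ : ∀ t : ℕ, t < k - d → μ t = 0 := by
    intro t ht
    have h1 : d < k - t := by omega
    have h2 : k - t ≤ k := Nat.sub_le _ _
    have h3 : S.coeff (k - t) = 0 := coeff_eq_zero_of_natDegree_lt h1
    rw [hScoeff] at h3
    have h4 : k - (k - t) = t := by omega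
    rw [h4] at h3
    have h5 : (k.choose (k - t) : ℤ) ≠ 0 := by
      exact_mod_cast Nat.pos_iff_ne_zero.mp (Nat.choose_pos h2)
    exact (mul_eq_zero.mp h3).resolve_left h5
  -- degree of q
  have hqnd : q.natDegree ≤ k - 1 := natDegree_le_iff_degree_le.mpr hq
  -- coefficient of q.comp (X + C a)
  have hqcomp : ∀ (a : ℤ) (j : ℕ), (q.comp (X + C a)).coeff j =
      ∑ s ∈ Finset.range (q.natDegree + 1),
        q.coeff s * (a ^ (s - j) * (s.choose j : ℤ)) := by
    intro a j
    conv_lhs => rw [q.as_sum_range]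
    rw [Polynomial.sum_comp, finset_sum_coeff]
    refine Finset.sum_congr rfl fun s _ => ?_
    rw [monomial_comp, coeff_C_mul, coeff_X_add_C_pow]
  -- high coefficients of E vanish
  have hEcoeff : ∀ j : ℕ, d ≤ j → E.coeff j = 0 := by
    intro j hj
    rw [hE, finset_sum_coeff]
    have : ∀ i : Fin r, (C (l i) * q.comp (X + C (h i))).coeff j =
        ∑ s ∈ Finset.range (q.natDegree + 1),
          q.coeff s * (s.choose j : ℤ) * (l i * h i ^ (s - j)) := by
      intro i
      rw [coeff_C_mul, hqcomp, Finset.mul_sum]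
      refine Finset.sum_congr rfl fun s _ => ?_
      ring
    rw [Finset.sum_congr rfl fun i _ => this i, Finset.sum_comm]
    refine Finset.sum_eq_zero fun s hs => ?_
    rw [← Finset.mul_sum]
    rcases le_or_gt j s with hjs | hjs
    · have hs' : s ≤ k - 1 := le_trans (Nat.lt_succ_iff.mp (Finset.mem_range.mp hs)) hqnd
      have h0 : ∑ i, l i * h i ^ (s - j) = 0 := hμ _ (by omega)
      rw [h0, mul_zero]
    · rw [Nat.choose_eq_zero_of_lt hjs]
      simp
  have hEd : E.degree < S.degree := by
    rw [hSdeg]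
    exact (degree_lt_iff_coeff_zero E d).mpr fun n hn => hEcoeff n (by exact_mod_cast hn)
  have hCmS : (C (m : ℤ) * S).degree = S.degree := degree_C_mul hm0
  have hlt : E.degree < (C (m : ℤ) * S).degree := hCmS ▸ hEd
  have hdegtot : (∑ i, C (l i) * p.comp (X + C (h i)) : Polynomial ℤ).degree = S.degree := by
    rw [hdecomp, degree_add_eq_left_of_degree_lt hlt, hCmS]
  refine ⟨?_, hdegtot, ?_⟩
  · intro h0
    rw [h0, degree_zero, eq_comm, degree_eq_bot] at hdegtot
    exact hPk hdegtot
  · rw [hdecomp, leadingCoeff_add_of_degree_lt' hlt, leadingCoeff_mul, leadingCoeff_C]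
end
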